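/- arXiv:2304.12834 — 4 statements merged into one kernel-verified Lean document; each statement's English description precedes it below -/
import Mathlib

section
/- Assume (A2)–(A3) for some t₀ > 0, the ground state data with the spectral-gap kernel estimate, and Z(t₁) < ∞ for some t₁ ≥ t₀. Then m is a quasi-stationary measure of {U_t}, and it is unique in the following sense: if m̄ is any quasi-stationary probability measure of {U_t} with m̄(φ₀) > 0, then m̄ = m. Analogously, m* is the unique quasi-stationary probability measure of {U_t*} among those m̄ with m̄(ψ₀) > 0. -/
open MeasureTheory Real Set Filter Topology
open scoped ENNReal NNReal

noncomputable section

variable {M : Type*}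

/-- The integral operator `U_t` associated with the kernel `u`:
`U_t f (x) = ∫ u_t(x,y) f(y) μ(dy)`. -/
def Uop [MeasurableSpace M] (μ : Measure M) (u : ℝ → M → M → ℝ)
    (t : ℝ) (f : M → ℝ) (x : M) : ℝ :=
  ∫ y, u t x y * f y ∂μ

/-- The adjoint integral operator `U_t^*`:
`U_t^* g (y) = ∫ u_t(x,y) g(x) μ(dx)`. -/
def Ustar [MeasurableSpace M] (μ : Measure M) (u : ℝ → M → M → ℝ)
    (t : ℝ) (g : M → ℝ) (y : M) : ℝ :=
  ∫ x, u t x y * g x ∂μ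

/-- The heat content `Z(t) = ∬ u_t(x,y) μ(dx) μ(dy)`. -/
def heatContent [MeasurableSpace M] (μ : Measure M) (u : ℝ → M → M → ℝ) (t : ℝ) : ℝ≥0∞ :=
  ∫⁻ x, ∫⁻ y, ENNReal.ofReal (u t x y) ∂μ ∂μ

/-- An exhausting family of compact sets `{K_t : t ≥ t₀}`. -/
def ExhaustingFamily [TopologicalSpace M] (t₀ : ℝ) (K : ℝ → Set M) : Prop :=
  (∀ t, t₀ ≤ t → IsCompact (K t)) ∧
  (∀ s t, t₀ ≤ s → s < t → K s ⊆ K t) ∧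
  (⋃ t ∈ Set.Ici t₀, K t) = Set.univ ∧
  (∀ A : Set M, IsCompact A → ∃ t, t₀ ≤ t ∧ A ⊆ K t)

/-- `m̄` is a quasi-stationary (probability) measure of the semigroup `{U_t}`:
for every `t > 0` and every bounded Borel `f`, `m̄(U_t 1) > 0` and
`m̄(U_t f)/m̄(U_t 1) = m̄(f)`. -/
def IsQSM [MeasurableSpace M] (μ : Measure M) (u : ℝ → M → M → ℝ) (mb : Measure M) : Prop :=
  ∀ t : ℝ, 0 < t → ∀ f : M → ℝ, Measurable f → (∃ C, ∀ x, |f x| ≤ C) →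
    0 < (∫ x, Uop μ u t (fun _ => (1 : ℝ)) x ∂mb) ∧
    (∫ x, Uop μ u t f x ∂mb) / (∫ x, Uop μ u t (fun _ => (1 : ℝ)) x ∂mb) = ∫ x, f x ∂mb

/-- Quasi-stationarity for the adjoint semigroup `{U_t^*}`. -/
def IsQSMstar [MeasurableSpace M] (μ : Measure M) (u : ℝ → M → M → ℝ) (mb : Measure M) : Prop :=
  ∀ t : ℝ, 0 < t → ∀ f : M → ℝ, Measurable f → (∃ C, ∀ x, |f x| ≤ C) →
    0 < (∫ x, Ustar μ u t (fun _ => (1 : ℝ)) x ∂mb) ∧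
    (∫ x, Ustar μ u t f x ∂mb) / (∫ x, Ustar μ u t (fun _ => (1 : ℝ)) x ∂mb) = ∫ x, f x ∂mb


-- helper 1
theorem myOfRealIntegralLe [MeasurableSpace M] (μ : Measure M) {h : M → ℝ}
    (h0 : 0 ≤ᵐ[μ] h) : ENNReal.ofReal (∫ x, h x ∂μ) ≤ ∫⁻ x, ENNReal.ofReal (h x) ∂μ := by
  by_cases hi : Integrable h μ
  · exact le_of_eq (ofReal_integral_eq_lintegral_ofReal hi h0)
  · rw [integral_undef hi]; simp

-- helper 2
theorem myOfRealAbsIntegralLe [MeasurableSpace M] (μ : Measure M) (h : M → ℝ) :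
    ENNReal.ofReal |∫ x, h x ∂μ| ≤ ∫⁻ x, ENNReal.ofReal |h x| ∂μ := by
  by_cases hi : Integrable h μ
  · calc ENNReal.ofReal |∫ x, h x ∂μ| ≤ ENNReal.ofReal (∫ x, |h x| ∂μ) := by
          apply ENNReal.ofReal_le_ofReal
          simpa [Real.norm_eq_abs] using norm_integral_le_integral_norm (μ := μ) h
    _ = ∫⁻ x, ENNReal.ofReal |h x| ∂μ :=
          ofReal_integral_eq_lintegral_ofReal hi.abs (ae_of_all _ fun x => abs_nonneg _)
  · rw [integral_undef hi]; simp

-- helper 3 : from a.e. bound to everywhere bound, via continuity and full support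
theorem myAbsLeEverywhere [TopologicalSpace M] [MeasurableSpace M]
    (μ : Measure M) [μ.IsOpenPosMeasure] {F : M → ℝ} {cst : ℝ}
    (hF : Continuous F) (h : ∀ᵐ x ∂μ, |F x| ≤ cst) : ∀ x, |F x| ≤ cst := by
  have h2 : (fun x => max |F x| cst) =ᵐ[μ] (fun _ => cst) := h.mono fun x hx => max_eq_right hx
  have h3 := (Continuous.ae_eq_iff_eq μ ((continuous_abs.comp hF).max continuous_const)
      continuous_const).mp h2
  intro x
  exact max_eq_right_iff.mp (congrFun h3 x)

set_option maxHeartbeats 2000000 in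
theorem key [TopologicalSpace M] [MeasurableSpace M] [BorelSpace M]
    (μ : Measure M) [Measure.IsOpenPosMeasure μ] [SigmaFinite μ]
    (u : ℝ → M → M → ℝ)
    (hu_nonneg : ∀ t, 0 < t → ∀ x y, 0 ≤ u t x y)
    (hu_meas : ∀ t, 0 < t → Measurable (Function.uncurry (u t)))
    (hCK : ∀ s t : ℝ, 0 < s → 0 < t → ∀ x y,
      u (s + t) x y = ∫ z, u s x z * u t z y ∂μ)
    (t₀ : ℝ) (ht₀ : 0 < t₀)
    (hA2 : ∀ t, 0 < t → ∀ f : M → ℝ, Measurable f → (∃ C, ∀ x, |f x| ≤ C) →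
      Continuous (Uop μ u t f) ∧ (∃ C, ∀ x, |Uop μ u t f x| ≤ C))
    (lam : ℝ) (phi psi : M → ℝ)
    (hphi_cont : Continuous phi) (hphi_bdd : ∃ C, ∀ x, |phi x| ≤ C)
    (hpsi_cont : Continuous psi) (hpsi_bdd : ∃ C, ∀ x, |psi x| ≤ C)
    (hpsi_pos : ∀ᵐ x ∂μ, 0 < psi x)
    (hpsi_eig : ∀ t, 0 < t → ∀ y, Ustar μ u t psi y = Real.exp (-(lam * t)) * psi y)
    (hLam_pos : 0 < ∫ x, phi x * psi x ∂μ)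
    (C₀ γ : ℝ) (hC₀ : 0 < C₀) (hγ : 0 < γ)
    (hgap : ∀ t, 2 * t₀ < t → ∀ᵐ q ∂(μ.prod μ),
      |Real.exp (lam * t) * u t q.1 q.2 -
        (∫ x, phi x * psi x ∂μ)⁻¹ * (phi q.1 * psi q.2)| ≤ C₀ * Real.exp (-(γ * t)))
    (t₁ : ℝ) (ht₁ : 0 < t₁)
    (hZ : heatContent μ u t₁ < ⊤) :
    IsQSM μ u ((∫⁻ x, ENNReal.ofReal (psi x) ∂μ)⁻¹ • μ.withDensity fun x => ENNReal.ofReal (psi x)) ∧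
      ∀ mb : Measure M, IsProbabilityMeasure mb → IsQSM μ u mb →
        0 < ∫ x, phi x ∂mb →
        mb = ((∫⁻ x, ENNReal.ofReal (psi x) ∂μ)⁻¹ • μ.withDensity fun x => ENNReal.ofReal (psi x)) := by
  classical
  obtain ⟨Cφ, hCφ⟩ := hphi_bdd
  obtain ⟨Cψ, hCψ⟩ := hpsi_bdd
  set ν : Measure M := μ.withDensity fun x => ENNReal.ofReal (psi x) with hνdef
  set c : ℝ≥0∞ := (∫⁻ x, ENNReal.ofReal (psi x) ∂μ)⁻¹ with hcdef
  set m : Measure M := c • ν with hmdef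
  have hψ0 : ∀ᵐ x ∂μ, 0 ≤ psi x := hpsi_pos.mono fun x hx => hx.le
  have hψm : Measurable psi := hpsi_cont.measurable
  have hμ0 : μ ≠ 0 := by
    intro h; rw [h] at hLam_pos; simp at hLam_pos
  have hM : Nonempty M := by
    by_contra h
    rw [not_nonempty_iff] at h
    refine hμ0 (Measure.ext fun s _ => ?_)
    simp [Set.eq_empty_of_isEmpty s]
  have hCψ0 : 0 ≤ Cψ := le_trans (abs_nonneg _) (hCψ (Classical.arbitrary M))
  have hCφ0 : 0 ≤ Cφ := le_trans (abs_nonneg _) (hCφ (Classical.arbitrary M))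
  set Λ : ℝ := ∫ x, phi x * psi x ∂μ with hΛ
  have hΛi0 : 0 ≤ Λ⁻¹ := inv_nonneg.mpr hLam_pos.le
  set J : M → ℝ≥0∞ := fun z => ∫⁻ y, ENNReal.ofReal (u t₁ z y) ∂μ with hJ
  have hHC : heatContent μ u t₁ = ∫⁻ z, J z ∂μ := rfl
  set Z₁ : ℝ := (heatContent μ u t₁).toReal with hZ₁
  have hZ₁0 : 0 ≤ Z₁ := ENNReal.toReal_nonneg
  -- measurability of kernel on the product
  have humm : ∀ t, 0 < t → Measurable (fun q : M × M => u t q.1 q.2) := fun t ht => hu_meas t ht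
  -- swap of heat content
  have hswapHC : heatContent μ u t₁ = ∫⁻ y, ∫⁻ x, ENNReal.ofReal (u t₁ x y) ∂μ ∂μ := by
    exact lintegral_lintegral_swap (((humm t₁ ht₁).ennreal_ofReal).aemeasurable)
  -- Step A : integrability of psi
  have hψ_lint : (∫⁻ x, ENNReal.ofReal (psi x) ∂μ) < ⊤ := by
    have step : ∀ y : M, ENNReal.ofReal (psi y) ≤
        (ENNReal.ofReal (Real.exp (lam * t₁)) * ENNReal.ofReal Cψ) *
          ∫⁻ x, ENNReal.ofReal (u t₁ x y) ∂μ := by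
      intro y
      have h1 : psi y = Real.exp (lam * t₁) * Ustar μ u t₁ psi y := by
        rw [hpsi_eig t₁ ht₁ y, ← mul_assoc, ← Real.exp_add, add_neg_cancel, Real.exp_zero, one_mul]
      calc ENNReal.ofReal (psi y)
          = ENNReal.ofReal (Real.exp (lam * t₁)) * ENNReal.ofReal (Ustar μ u t₁ psi y) := by
            rw [h1, ENNReal.ofReal_mul (Real.exp_pos _).le]
        _ ≤ ENNReal.ofReal (Real.exp (lam * t₁)) * ∫⁻ x, ENNReal.ofReal (u t₁ x y * psi x) ∂μ := by
            gcongr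
            exact myOfRealIntegralLe μ (hψ0.mono fun x hx => mul_nonneg (hu_nonneg t₁ ht₁ x y) hx)
        _ ≤ ENNReal.ofReal (Real.exp (lam * t₁)) *
              ∫⁻ x, ENNReal.ofReal (u t₁ x y) * ENNReal.ofReal Cψ ∂μ := by
            gcongr with x
            rw [← ENNReal.ofReal_mul (hu_nonneg t₁ ht₁ x y)]
            exact ENNReal.ofReal_le_ofReal
              (mul_le_mul_of_nonneg_left ((le_abs_self _).trans (hCψ x)) (hu_nonneg t₁ ht₁ x y))
        _ = (ENNReal.ofReal (Real.exp (lam * t₁)) * ENNReal.ofReal Cψ) *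
              ∫⁻ x, ENNReal.ofReal (u t₁ x y) ∂μ := by
            rw [lintegral_mul_const' _ _ ENNReal.ofReal_ne_top]; ring
    calc (∫⁻ x, ENNReal.ofReal (psi x) ∂μ)
        ≤ ∫⁻ y, (ENNReal.ofReal (Real.exp (lam * t₁)) * ENNReal.ofReal Cψ) *
            ∫⁻ x, ENNReal.ofReal (u t₁ x y) ∂μ ∂μ := lintegral_mono step
      _ = (ENNReal.ofReal (Real.exp (lam * t₁)) * ENNReal.ofReal Cψ) * heatContent μ u t₁ := by
          rw [lintegral_const_mul' _ _ (ENNReal.mul_ne_top ENNReal.ofReal_ne_top ENNReal.ofReal_ne_top), hswapHC]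
      _ < ⊤ := ENNReal.mul_lt_top (ENNReal.mul_lt_top ENNReal.ofReal_lt_top ENNReal.ofReal_lt_top) hZ
  have hψ_int : Integrable psi μ := by
    refine ⟨hpsi_cont.aestronglyMeasurable, ?_⟩
    rw [hasFiniteIntegral_iff_norm]
    calc ∫⁻ x, ENNReal.ofReal ‖psi x‖ ∂μ = ∫⁻ x, ENNReal.ofReal (psi x) ∂μ := by
          refine lintegral_congr_ae (hψ0.mono fun x hx => ?_)
          simp [Real.norm_eq_abs, abs_of_nonneg hx]
      _ < ⊤ := hψ_lint
  set Iψ : ℝ := ∫ x, psi x ∂μ with hIψ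
  have hlin : (∫⁻ x, ENNReal.ofReal (psi x) ∂μ) = ENNReal.ofReal Iψ :=
    (ofReal_integral_eq_lintegral_ofReal hψ_int hψ0).symm
  have hIψ_pos : 0 < Iψ := by
    rw [hIψ, integral_pos_iff_support_of_nonneg_ae hψ0 hψ_int]
    have hc : μ (Function.support psi)ᶜ = 0 := by
      refine measure_mono_null ?_ (ae_iff.mp hpsi_pos)
      intro x hx
      simp only [Function.mem_support, not_not, Set.mem_compl_iff] at hx
      simp [hx]
    by_contra h
    push_neg at h
    have h0 : μ (Function.support psi) = 0 := le_antisymm h zero_le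
    have : μ Set.univ = 0 := by
      have := measure_union_le (μ := μ) (Function.support psi) (Function.support psi)ᶜ
      rw [Set.union_compl_self, h0, hc] at this
      simpa using this
    exact hμ0 (Measure.measure_univ_eq_zero.mp this)
  -- Step B : core identity  ∫ ψ · U_t f dμ = e^{-λt} ∫ f ψ dμ
  have core : ∀ t, 0 < t → ∀ f : M → ℝ, Measurable f → ∀ Cf : ℝ, 0 ≤ Cf → (∀ x, |f x| ≤ Cf) →
      (∫ x, psi x * Uop μ u t f x ∂μ) = Real.exp (-(lam * t)) * ∫ y, f y * psi y ∂μ := by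
    intro t ht f hf Cf hCf0 hCf
    have hum := humm t ht
    have hFm : Measurable (fun q : M × M => psi q.1 * (u t q.1 q.2 * f q.2)) :=
      (hψm.comp measurable_fst).mul (hum.mul (hf.comp measurable_snd))
    have hψ0' : ∀ᵐ q ∂(μ.prod μ), 0 ≤ psi q.1 :=
      Measure.quasiMeasurePreserving_fst.ae hψ0
    have hprod_u : ∀ᵐ y ∂μ, (∫⁻ x, ENNReal.ofReal (u t x y * psi x) ∂μ)
        = ENNReal.ofReal (Real.exp (-(lam * t)) * psi y) := by
      filter_upwards [hpsi_pos] with y hy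
      have hne : Integrable (fun x => u t x y * psi x) μ := by
        by_contra hni
        have h0 : Ustar μ u t psi y = 0 := integral_undef hni
        rw [hpsi_eig t ht y] at h0
        nlinarith [Real.exp_pos (-(lam * t)), hy]
      rw [← ofReal_integral_eq_lintegral_ofReal hne
        (hψ0.mono fun x hx => mul_nonneg (hu_nonneg t ht x y) hx)]
      congr 1
      exact hpsi_eig t ht y
    have hFint : Integrable (fun q : M × M => psi q.1 * (u t q.1 q.2 * f q.2)) (μ.prod μ) := by
      refine ⟨hFm.aestronglyMeasurable, ?_⟩
      rw [hasFiniteIntegral_iff_norm]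
      have hbound : ∀ᵐ q ∂(μ.prod μ), ENNReal.ofReal ‖psi q.1 * (u t q.1 q.2 * f q.2)‖ ≤
          ENNReal.ofReal Cf * ENNReal.ofReal (u t q.1 q.2 * psi q.1) := by
        filter_upwards [hψ0'] with q hq
        rw [← ENNReal.ofReal_mul hCf0]
        apply ENNReal.ofReal_le_ofReal
        have h1 : ‖psi q.1 * (u t q.1 q.2 * f q.2)‖ = psi q.1 * (u t q.1 q.2 * |f q.2|) := by
          rw [Real.norm_eq_abs, abs_mul, abs_mul, abs_of_nonneg hq,
            abs_of_nonneg (hu_nonneg t ht q.1 q.2)]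
        rw [h1]
        nlinarith [mul_le_mul_of_nonneg_left (hCf q.2)
          (mul_nonneg hq (hu_nonneg t ht q.1 q.2)), hq, hu_nonneg t ht q.1 q.2, abs_nonneg (f q.2)]
      calc ∫⁻ q, ENNReal.ofReal ‖psi q.1 * (u t q.1 q.2 * f q.2)‖ ∂(μ.prod μ)
          ≤ ∫⁻ q, ENNReal.ofReal Cf * ENNReal.ofReal (u t q.1 q.2 * psi q.1) ∂(μ.prod μ) :=
            lintegral_mono_ae hbound
        _ = ENNReal.ofReal Cf * ∫⁻ q : M × M,
              ENNReal.ofReal (u t q.1 q.2 * psi q.1) ∂(μ.prod μ) :=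
            lintegral_const_mul' _ _ ENNReal.ofReal_ne_top
        _ = ENNReal.ofReal Cf * ∫⁻ y, ∫⁻ x, ENNReal.ofReal (u t x y * psi x) ∂μ ∂μ := by
            congr 1
            exact lintegral_prod_symm _
              ((hum.mul (hψm.comp measurable_fst)).ennreal_ofReal).aemeasurable
        _ = ENNReal.ofReal Cf * ∫⁻ y, ENNReal.ofReal (Real.exp (-(lam * t)) * psi y) ∂μ := by
            rw [lintegral_congr_ae hprod_u]
        _ = ENNReal.ofReal Cf * (ENNReal.ofReal (Real.exp (-(lam * t))) *
              ∫⁻ y, ENNReal.ofReal (psi y) ∂μ) := by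
            congr 1
            rw [← lintegral_const_mul' _ _ ENNReal.ofReal_ne_top]
            refine lintegral_congr fun y => ?_
            rw [ENNReal.ofReal_mul (Real.exp_pos _).le]
        _ < ⊤ := ENNReal.mul_lt_top ENNReal.ofReal_lt_top
              (ENNReal.mul_lt_top ENNReal.ofReal_lt_top hψ_lint)
    have hswap := integral_integral_swap
      (f := fun x y => psi x * (u t x y * f y)) hFint
    calc (∫ x, psi x * Uop μ u t f x ∂μ)
        = ∫ x, ∫ y, psi x * (u t x y * f y) ∂μ ∂μ := by
          congr 1; funext x; exact (integral_const_mul _ _).symm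
      _ = ∫ y, ∫ x, psi x * (u t x y * f y) ∂μ ∂μ := hswap
      _ = ∫ y, (∫ x, u t x y * psi x ∂μ) * f y ∂μ := by
          congr 1; funext y
          rw [← integral_mul_const]
          congr 1; funext x; ring
      _ = ∫ y, (Real.exp (-(lam * t)) * psi y) * f y ∂μ := by
          congr 1; funext y
          rw [show (∫ x, u t x y * psi x ∂μ) = Ustar μ u t psi y from rfl, hpsi_eig t ht y]
      _ = Real.exp (-(lam * t)) * ∫ y, f y * psi y ∂μ := by
          rw [← integral_const_mul]
          congr 1; funext y; ring
  -- integrals against m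
  have hct : c.toReal = Iψ⁻¹ := by
    rw [hcdef, hlin, ENNReal.toReal_inv, ENNReal.toReal_ofReal hIψ_pos.le]
  have hνint : ∀ g : M → ℝ, (∫ x, g x ∂ν) = ∫ x, psi x * g x ∂μ := by
    intro g
    have hψnn : AEMeasurable (fun x => Real.toNNReal (psi x)) μ :=
      (measurable_real_toNNReal.comp hψm).aemeasurable
    have hid : ν = μ.withDensity fun x => ((Real.toNNReal (psi x) : ℝ≥0) : ℝ≥0∞) := rfl
    rw [hid, integral_withDensity_eq_integral_smul₀ hψnn g]
    refine integral_congr_ae (hψ0.mono fun x hx => ?_)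
    simp [NNReal.smul_def, Real.coe_toNNReal _ hx]
  have hm_int : ∀ g : M → ℝ, (∫ x, g x ∂m) = Iψ⁻¹ * ∫ x, psi x * g x ∂μ := by
    intro g
    rw [hmdef, integral_smul_measure, hνint, hct, smul_eq_mul]
  -- Step B3 : m is a QSM
  have hQSM : IsQSM μ u m := by
    intro t ht f hf hfb
    obtain ⟨Cf, hCf⟩ := hfb
    have hCf0 : 0 ≤ Cf := le_trans (abs_nonneg _) (hCf (Classical.arbitrary M))
    have h1 : (∫ x, Uop μ u t (fun _ => (1 : ℝ)) x ∂m) = Real.exp (-(lam * t)) := by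
      rw [hm_int, core t ht (fun _ => 1) measurable_const 1 zero_le_one (fun x => by norm_num)]
      simp only [one_mul]
      rw [← hIψ]
      field_simp
    refine ⟨by rw [h1]; exact Real.exp_pos _, ?_⟩
    rw [h1, hm_int, hm_int, core t ht f hf Cf hCf0 hCf]
    have hflip : (∫ x, psi x * f x ∂μ) = ∫ y, f y * psi y ∂μ := by
      congr 1; funext x; ring
    rw [hflip]
    field_simp
  -- Step C1 : key uniform estimate
  have EST : ∀ f : M → ℝ, Measurable f → ∀ Cf : ℝ, 0 ≤ Cf → (∀ x, |f x| ≤ Cf) →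
      ∀ t, 2 * t₀ + t₁ < t → ∀ x,
      |Real.exp (lam * t) * Uop μ u t f x - Λ⁻¹ * (∫ y, f y * psi y ∂μ) * phi x|
        ≤ (Real.exp (lam * t₁) * Real.exp (γ * t₁) * (C₀ * (Cf * Z₁))) * Real.exp (-(γ * t)) := by
    intro f hf Cf hCf0 hCf t htt
    have ht0' : 0 < t := by nlinarith
    set g : M → ℝ := Uop μ u t₁ f with hg
    obtain ⟨hg_cont, Cg, hCg⟩ := hA2 t₁ ht₁ f hf ⟨Cf, hCf⟩
    have hg_meas : Measurable g := hg_cont.measurable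
    -- integrability of g with explicit L¹ bound
    have hg_ofReal : ∀ z, ENNReal.ofReal |g z| ≤ ENNReal.ofReal Cf * J z := by
      intro z
      calc ENNReal.ofReal |g z| ≤ ∫⁻ y, ENNReal.ofReal |u t₁ z y * f y| ∂μ :=
            myOfRealAbsIntegralLe μ _
        _ ≤ ∫⁻ y, ENNReal.ofReal Cf * ENNReal.ofReal (u t₁ z y) ∂μ := by
            refine lintegral_mono fun y => ?_
            rw [← ENNReal.ofReal_mul hCf0]
            apply ENNReal.ofReal_le_ofReal
            rw [abs_mul, abs_of_nonneg (hu_nonneg t₁ ht₁ z y)]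
            nlinarith [hCf y, hu_nonneg t₁ ht₁ z y, abs_nonneg (f y)]
        _ = ENNReal.ofReal Cf * J z := lintegral_const_mul' _ _ ENNReal.ofReal_ne_top
    have hg_lint : (∫⁻ z, ENNReal.ofReal |g z| ∂μ) ≤ ENNReal.ofReal Cf * heatContent μ u t₁ := by
      calc (∫⁻ z, ENNReal.ofReal |g z| ∂μ) ≤ ∫⁻ z, ENNReal.ofReal Cf * J z ∂μ :=
            lintegral_mono hg_ofReal
        _ = ENNReal.ofReal Cf * heatContent μ u t₁ := by
            rw [lintegral_const_mul' _ _ ENNReal.ofReal_ne_top, hHC]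
    have hg_int : Integrable g μ := by
      refine ⟨hg_cont.aestronglyMeasurable, ?_⟩
      rw [hasFiniteIntegral_iff_norm]
      refine lt_of_le_of_lt (b := ENNReal.ofReal Cf * heatContent μ u t₁) ?_
        (ENNReal.mul_lt_top ENNReal.ofReal_lt_top hZ)
      simpa [Real.norm_eq_abs] using hg_lint
    have hg_abs : (∫ z, |g z| ∂μ) ≤ Cf * Z₁ := by
      rw [integral_eq_lintegral_of_nonneg_ae (ae_of_all _ fun z => abs_nonneg _)
        (hg_cont.abs.aestronglyMeasurable)]
      calc (∫⁻ z, ENNReal.ofReal |g z| ∂μ).toReal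
          ≤ (ENNReal.ofReal Cf * heatContent μ u t₁).toReal :=
            ENNReal.toReal_mono (ENNReal.mul_ne_top ENNReal.ofReal_ne_top hZ.ne) hg_lint
        _ = Cf * Z₁ := by rw [ENNReal.toReal_mul, ENNReal.toReal_ofReal hCf0, hZ₁]
    have hψg : (∫ z, psi z * g z ∂μ) = Real.exp (-(lam * t₁)) * ∫ y, f y * psi y ∂μ :=
      core t₁ ht₁ f hf Cf hCf0 hCf
    set Sf : ℝ := ∫ y, f y * psi y ∂μ with hSf
    set s : ℝ := t - t₁ with hsdef
    have hs2 : 2 * t₀ < s := by rw [hsdef]; linarith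
    have hs0 : 0 < s := by nlinarith
    have hae : ∀ᵐ x ∂μ,
        |Real.exp (lam * t) * Uop μ u t f x - Λ⁻¹ * Sf * phi x|
          ≤ (Real.exp (lam * t₁) * Real.exp (γ * t₁) * (C₀ * (Cf * Z₁))) * Real.exp (-(γ * t)) := by
      have hgap' := Measure.ae_ae_of_ae_prod (hgap s hs2)
      filter_upwards [hgap'] with x hx
      -- a.e. bound on the kernel at time s
      set B : ℝ := Λ⁻¹ * (Cφ * Cψ) + C₀ with hB
      have hub : ∀ᵐ z ∂μ, u s x z ≤ Real.exp (-(lam * s)) * B := by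
        filter_upwards [hx] with z hz
        have h2 := (abs_le.mp hz).2
        have h3 : Real.exp (lam * s) * u s x z ≤ B := by
          have hexp1 : Real.exp (-(γ * s)) ≤ 1 := by
            rw [Real.exp_le_one_iff]; nlinarith
          have h4 : phi x * psi z ≤ Cφ * Cψ := by
            calc phi x * psi z ≤ |phi x * psi z| := le_abs_self _
              _ = |phi x| * |psi z| := abs_mul _ _
              _ ≤ Cφ * Cψ := mul_le_mul (hCφ x) (hCψ z) (abs_nonneg _) hCφ0
          have h5 : Λ⁻¹ * (phi x * psi z) ≤ Λ⁻¹ * (Cφ * Cψ) :=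
            mul_le_mul_of_nonneg_left h4 hΛi0
          rw [hB]
          nlinarith [Real.exp_pos (-(γ * s)), mul_le_mul_of_nonneg_left hexp1 hC₀.le]
        calc u s x z
            = Real.exp (-(lam * s)) * (Real.exp (lam * s) * u s x z) := by
              rw [← mul_assoc, ← Real.exp_add, neg_add_cancel, Real.exp_zero, one_mul]
          _ ≤ Real.exp (-(lam * s)) * B := mul_le_mul_of_nonneg_left h3 (Real.exp_pos _).le
      -- Chapman–Kolmogorov + Fubini
      have husx : Measurable (u s x) := (hu_meas s hs0).of_uncurry_left
      have hKm : Measurable (fun p : M × M => u s x p.1 * (u t₁ p.1 p.2 * f p.2)) :=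
        (husx.comp measurable_fst).mul ((humm t₁ ht₁).mul (hf.comp measurable_snd))
      have hKint : Integrable (fun p : M × M => u s x p.1 * (u t₁ p.1 p.2 * f p.2)) (μ.prod μ) := by
        refine ⟨hKm.aestronglyMeasurable, ?_⟩
        rw [hasFiniteIntegral_iff_norm]
        have hble : ∀ᵐ z ∂μ, (∫⁻ y, ENNReal.ofReal ‖u s x z * (u t₁ z y * f y)‖ ∂μ)
            ≤ ENNReal.ofReal (Real.exp (-(lam * s)) * B) * (ENNReal.ofReal Cf * J z) := by
          filter_upwards [hub] with z hz
          calc (∫⁻ y, ENNReal.ofReal ‖u s x z * (u t₁ z y * f y)‖ ∂μ)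
              ≤ ∫⁻ y, ENNReal.ofReal (Real.exp (-(lam * s)) * B) *
                  (ENNReal.ofReal Cf * ENNReal.ofReal (u t₁ z y)) ∂μ := by
                refine lintegral_mono fun y => ?_
                rw [← ENNReal.ofReal_mul hCf0, ← ENNReal.ofReal_mul
                  (le_trans (hu_nonneg s hs0 x z) hz)]
                apply ENNReal.ofReal_le_ofReal
                rw [Real.norm_eq_abs, abs_mul, abs_mul,
                  abs_of_nonneg (hu_nonneg s hs0 x z), abs_of_nonneg (hu_nonneg t₁ ht₁ z y)]
                have hf1 : u t₁ z y * |f y| ≤ Cf * u t₁ z y := by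
                  nlinarith [hCf y, hu_nonneg t₁ ht₁ z y, abs_nonneg (f y)]
                nlinarith [hu_nonneg s hs0 x z, hu_nonneg t₁ ht₁ z y, abs_nonneg (f y),
                  mul_le_mul_of_nonneg_left hf1 (hu_nonneg s hs0 x z),
                  mul_le_mul_of_nonneg_right hz (mul_nonneg hCf0 (hu_nonneg t₁ ht₁ z y))]
              _ = ENNReal.ofReal (Real.exp (-(lam * s)) * B) *
                  (ENNReal.ofReal Cf * J z) := by
                rw [lintegral_const_mul' _ _ ENNReal.ofReal_ne_top,
                  lintegral_const_mul' _ _ ENNReal.ofReal_ne_top]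
        calc (∫⁻ p, ENNReal.ofReal ‖u s x p.1 * (u t₁ p.1 p.2 * f p.2)‖ ∂(μ.prod μ))
            = ∫⁻ z, ∫⁻ y, ENNReal.ofReal ‖u s x z * (u t₁ z y * f y)‖ ∂μ ∂μ :=
              lintegral_prod _ (hKm.norm.ennreal_ofReal).aemeasurable
          _ ≤ ∫⁻ z, ENNReal.ofReal (Real.exp (-(lam * s)) * B) * (ENNReal.ofReal Cf * J z) ∂μ :=
              lintegral_mono_ae hble
          _ = ENNReal.ofReal (Real.exp (-(lam * s)) * B) * (ENNReal.ofReal Cf *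
                heatContent μ u t₁) := by
              rw [show (fun z => ENNReal.ofReal (Real.exp (-(lam * s)) * B) *
                (ENNReal.ofReal Cf * J z)) = fun z => (ENNReal.ofReal (Real.exp (-(lam * s)) * B) *
                ENNReal.ofReal Cf) * J z from funext fun z => by ring]
              rw [lintegral_const_mul' _ _ (ENNReal.mul_ne_top ENNReal.ofReal_ne_top
                ENNReal.ofReal_ne_top), ← hHC]
              ring
          _ < ⊤ := ENNReal.mul_lt_top ENNReal.ofReal_lt_top
              (ENNReal.mul_lt_top ENNReal.ofReal_lt_top hZ)
      have hck : Uop μ u t f x = Uop μ u s g x := by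
        calc Uop μ u t f x = ∫ y, (∫ z, u s x z * u t₁ z y ∂μ) * f y ∂μ := by
              unfold Uop
              congr 1; funext y
              rw [show t = s + t₁ by rw [hsdef]; ring, hCK s t₁ hs0 ht₁ x y]
          _ = ∫ y, ∫ z, u s x z * (u t₁ z y * f y) ∂μ ∂μ := by
              congr 1; funext y
              rw [← integral_mul_const]
              congr 1; funext z; ring
          _ = ∫ z, ∫ y, u s x z * (u t₁ z y * f y) ∂μ ∂μ :=
              integral_integral_swap hKint.swap
          _ = ∫ z, u s x z * g z ∂μ := by
              congr 1; funext z
              exact integral_const_mul _ _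
      -- integrabilities for the estimate
      have hgixz : Integrable (fun z => u s x z * g z) μ := by
        refine Integrable.mono' ((hg_int.abs).const_mul (Real.exp (-(lam * s)) * B))
          ((husx.mul hg_meas).aestronglyMeasurable) ?_
        filter_upwards [hub] with z hz
        rw [Real.norm_eq_abs, abs_mul, abs_of_nonneg (hu_nonneg s hs0 x z)]
        exact mul_le_mul_of_nonneg_right hz (abs_nonneg _)
      have hpsig : Integrable (fun z => psi z * g z) μ :=
        hg_int.bdd_mul hpsi_cont.aestronglyMeasurable
          (ae_of_all _ fun z => by simpa [Real.norm_eq_abs] using hCψ z)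
      have hid : Real.exp (lam * s) * Uop μ u s g x - Λ⁻¹ * phi x * (∫ z, psi z * g z ∂μ)
          = ∫ z, (Real.exp (lam * s) * u s x z - Λ⁻¹ * (phi x * psi z)) * g z ∂μ := by
        rw [show (fun z => (Real.exp (lam * s) * u s x z - Λ⁻¹ * (phi x * psi z)) * g z)
          = fun z => Real.exp (lam * s) * (u s x z * g z) -
              (Λ⁻¹ * phi x) * (psi z * g z) from funext fun z => by ring]
        rw [integral_sub (hgixz.const_mul _) (hpsig.const_mul _),
          integral_const_mul, integral_const_mul]
        rw [show Uop μ u s g x = ∫ z, u s x z * g z ∂μ from rfl]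
      have habs : |Real.exp (lam * s) * Uop μ u s g x - Λ⁻¹ * phi x * (∫ z, psi z * g z ∂μ)|
          ≤ C₀ * Real.exp (-(γ * s)) * (Cf * Z₁) := by
        rw [hid]
        have hintd : Integrable
            (fun z => (Real.exp (lam * s) * u s x z - Λ⁻¹ * (phi x * psi z)) * g z) μ := by
          refine ((hgixz.const_mul (Real.exp (lam * s))).sub
            (hpsig.const_mul (Λ⁻¹ * phi x))).congr
            (ae_of_all _ fun z => by simp only [Pi.sub_apply]; ring)
        calc |∫ z, (Real.exp (lam * s) * u s x z - Λ⁻¹ * (phi x * psi z)) * g z ∂μ|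
            ≤ ∫ z, |Real.exp (lam * s) * u s x z - Λ⁻¹ * (phi x * psi z)| * |g z| ∂μ := by
              simpa [Real.norm_eq_abs, abs_mul] using norm_integral_le_integral_norm
                (μ := μ) fun z => (Real.exp (lam * s) * u s x z - Λ⁻¹ * (phi x * psi z)) * g z
          _ ≤ ∫ z, (C₀ * Real.exp (-(γ * s))) * |g z| ∂μ := by
              refine integral_mono_ae
                (hintd.abs.congr (ae_of_all _ fun z => abs_mul _ _))
                ((hg_int.abs).const_mul _) ?_
              filter_upwards [hx] with z hz
              exact mul_le_mul_of_nonneg_right hz (abs_nonneg _)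
          _ = (C₀ * Real.exp (-(γ * s))) * ∫ z, |g z| ∂μ := integral_const_mul _ _
          _ ≤ C₀ * Real.exp (-(γ * s)) * (Cf * Z₁) :=
              mul_le_mul_of_nonneg_left hg_abs (by positivity)
      -- assemble
      have e2 : Λ⁻¹ * Sf * phi x = Real.exp (lam * t₁) * (Λ⁻¹ * phi x * (∫ z, psi z * g z ∂μ)) := by
        rw [hψg]
        rw [show Real.exp (lam * t₁) * (Λ⁻¹ * phi x * (Real.exp (-(lam * t₁)) * Sf))
          = (Real.exp (lam * t₁) * Real.exp (-(lam * t₁))) * (Λ⁻¹ * Sf * phi x) from by ring,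
          ← Real.exp_add, add_neg_cancel, Real.exp_zero, one_mul]
      have e3 : Real.exp (lam * t) * Uop μ u t f x - Λ⁻¹ * Sf * phi x
          = Real.exp (lam * t₁) * (Real.exp (lam * s) * Uop μ u s g x -
              Λ⁻¹ * phi x * (∫ z, psi z * g z ∂μ)) := by
        rw [hck, e2, show Real.exp (lam * t) = Real.exp (lam * t₁) * Real.exp (lam * s) from by
          rw [← Real.exp_add]; congr 1; rw [hsdef]; ring]
        ring
      rw [e3, abs_mul, abs_of_pos (Real.exp_pos _)]
      calc Real.exp (lam * t₁) * |Real.exp (lam * s) * Uop μ u s g x -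
              Λ⁻¹ * phi x * (∫ z, psi z * g z ∂μ)|
          ≤ Real.exp (lam * t₁) * (C₀ * Real.exp (-(γ * s)) * (Cf * Z₁)) :=
            mul_le_mul_of_nonneg_left habs (Real.exp_pos _).le
        _ = (Real.exp (lam * t₁) * Real.exp (γ * t₁) * (C₀ * (Cf * Z₁))) * Real.exp (-(γ * t)) := by
            rw [show -(γ * s) = γ * t₁ + -(γ * t) from by rw [hsdef]; ring, Real.exp_add]
            ring
    -- from a.e. to everywhere via continuity and full support
    have hFc : Continuous (fun x => Real.exp (lam * t) * Uop μ u t f x - Λ⁻¹ * Sf * phi x) :=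
      (continuous_const.mul (hA2 t ht0' f hf ⟨Cf, hCf⟩).1).sub (continuous_const.mul hphi_cont)
    exact myAbsLeEverywhere μ hFc hae
  -- Step C : uniqueness
  refine ⟨hQSM, ?_⟩
  intro mb hprob hqsm hphi_mb
  have hbint : ∀ h : M → ℝ, Continuous h → (∃ C, ∀ x, |h x| ≤ C) → Integrable h mb := by
    rintro h hc ⟨C, hC⟩
    exact Integrable.mono' (integrable_const C) hc.aestronglyMeasurable
      (ae_of_all _ fun x => by simpa [Real.norm_eq_abs] using hC x)
  set P : ℝ := ∫ x, phi x ∂mb with hP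
  -- mb-level estimate
  have KEY : ∀ f : M → ℝ, Measurable f → ∀ Cf : ℝ, 0 ≤ Cf → (∀ x, |f x| ≤ Cf) →
      Tendsto (fun t => Real.exp (lam * t) * ∫ x, Uop μ u t f x ∂mb) atTop
        (𝓝 (Λ⁻¹ * (∫ y, f y * psi y ∂μ) * P)) := by
    intro f hf Cf hCf0 hCf
    set A : ℝ := Λ⁻¹ * (∫ y, f y * psi y ∂μ) * P with hA
    set D : ℝ := Real.exp (lam * t₁) * Real.exp (γ * t₁) * (C₀ * (Cf * Z₁)) with hD
    have key1 : ∀ t, 2 * t₀ + t₁ < t →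
        |Real.exp (lam * t) * (∫ x, Uop μ u t f x ∂mb) - A| ≤ D * Real.exp (-(γ * t)) := by
      intro t htt
      have ht0' : 0 < t := by nlinarith
      obtain ⟨hcont, hbdd⟩ := hA2 t ht0' f hf ⟨Cf, hCf⟩
      have hint1 : Integrable (Uop μ u t f) mb := hbint _ hcont hbdd
      have hint2 : Integrable phi mb := hbint _ hphi_cont ⟨Cφ, hCφ⟩
      have h2 : Real.exp (lam * t) * (∫ x, Uop μ u t f x ∂mb) - A
          = ∫ x, (Real.exp (lam * t) * Uop μ u t f x -
              Λ⁻¹ * (∫ y, f y * psi y ∂μ) * phi x) ∂mb := by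
        rw [integral_sub (hint1.const_mul _) (hint2.const_mul _),
          integral_const_mul, integral_const_mul, hA, hP]
      rw [h2]
      have hb : ∀ x, ‖Real.exp (lam * t) * Uop μ u t f x -
          Λ⁻¹ * (∫ y, f y * psi y ∂μ) * phi x‖ ≤ D * Real.exp (-(γ * t)) := fun x => by
        rw [hD]
        simpa [Real.norm_eq_abs] using EST f hf Cf hCf0 hCf t htt x
      have := norm_integral_le_of_norm_le_const (μ := mb) (ae_of_all _ hb)
      simpa [Real.norm_eq_abs, measure_univ] using this
    have hTlim : Tendsto (fun t : ℝ => D * Real.exp (-(γ * t))) atTop (𝓝 0) := by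
      have h1 : Tendsto (fun t : ℝ => -(γ * t)) atTop atBot := by
        apply Filter.tendsto_neg_atBot_iff.mpr
        exact Tendsto.const_mul_atTop hγ tendsto_id
      have h2 : Tendsto (fun t : ℝ => Real.exp (-(γ * t))) atTop (𝓝 0) :=
        Real.tendsto_exp_atBot.comp h1
      simpa using h2.const_mul D
    have h0 : Tendsto (fun t => Real.exp (lam * t) * (∫ x, Uop μ u t f x ∂mb) - A)
        atTop (𝓝 0) := by
      refine squeeze_zero_norm' ?_ hTlim
      filter_upwards [eventually_gt_atTop (2 * t₀ + t₁)] with t htt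
      simpa [Real.norm_eq_abs] using key1 t htt
    simpa using h0.add_const A
  -- conclude : mb integrals of bounded functions
  have master : ∀ f : M → ℝ, Measurable f → ∀ Cf : ℝ, 0 ≤ Cf → (∀ x, |f x| ≤ Cf) →
      (∫ x, f x ∂mb) = (∫ y, f y * psi y ∂μ) / Iψ := by
    intro f hf Cf hCf0 hCf
    have lim1 := KEY f hf Cf hCf0 hCf
    have lim2 := KEY (fun _ => (1 : ℝ)) measurable_const 1 zero_le_one (fun x => by norm_num)
    have h1ψ : (∫ y, (1 : ℝ) * psi y ∂μ) = Iψ := by simp [hIψ]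
    rw [h1ψ] at lim2
    have hA1pos : 0 < Λ⁻¹ * Iψ * P :=
      mul_pos (mul_pos (inv_pos.mpr hLam_pos) hIψ_pos) hphi_mb
    have limq := lim1.div lim2 (ne_of_gt hA1pos)
    have heq : ∀ᶠ t in (atTop : Filter ℝ),
        ((fun t => Real.exp (lam * t) * ∫ x, Uop μ u t f x ∂mb) /
          (fun t => Real.exp (lam * t) * ∫ x, Uop μ u t (fun _ => (1 : ℝ)) x ∂mb)) t
          = ∫ x, f x ∂mb := by
      filter_upwards [eventually_gt_atTop (2 * t₀ + t₁)] with t htt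
      have ht0' : 0 < t := by nlinarith
      obtain ⟨hpos, hrat⟩ := hqsm t ht0' f hf ⟨Cf, hCf⟩
      simp only [Pi.div_apply]
      rw [mul_div_mul_left _ _ (Real.exp_ne_zero _)]
      exact hrat
    have hconst : Tendsto (fun _ : ℝ => ∫ x, f x ∂mb) atTop
        (𝓝 (Λ⁻¹ * (∫ y, f y * psi y ∂μ) * P / (Λ⁻¹ * Iψ * P))) := limq.congr' heq
    have heval := tendsto_nhds_unique hconst tendsto_const_nhds
    rw [← heval, div_eq_div_iff (ne_of_gt hA1pos) (ne_of_gt hIψ_pos)]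
    ring
  -- measures agree
  refine Measure.ext fun E hE => ?_
  have hindm : ∀ x, |E.indicator (fun _ => (1 : ℝ)) x| ≤ 1 := by
    intro x
    by_cases h : x ∈ E <;> simp [Set.indicator_of_mem, Set.indicator_of_notMem, h]
  have hfE := master (E.indicator fun _ => (1 : ℝ))
    (measurable_const.indicator hE) 1 zero_le_one hindm
  have lhs : (∫ x, E.indicator (fun _ => (1 : ℝ)) x ∂mb) = (mb E).toReal := by
    exact integral_indicator_one (μ := mb) hE
  have rhs1 : (∫ y, E.indicator (fun _ => (1 : ℝ)) y * psi y ∂μ) = ∫ y in E, psi y ∂μ := by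
    rw [← integral_indicator hE]
    congr 1; funext y
    by_cases h : y ∈ E <;> simp [Set.indicator_of_mem, Set.indicator_of_notMem, h]
  have hmbE : mb E = ENNReal.ofReal ((∫ y in E, psi y ∂μ) / Iψ) := by
    have h2 : (mb E).toReal = (∫ y in E, psi y ∂μ) / Iψ := by rw [← lhs, hfE, rhs1]
    rw [← h2, ENNReal.ofReal_toReal (measure_ne_top mb E)]
  have hmE : m E = ENNReal.ofReal ((∫ y in E, psi y ∂μ) / Iψ) := by
    rw [hmdef, Measure.smul_apply, smul_eq_mul, hνdef, withDensity_apply _ hE]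
    have h1 : (∫⁻ y in E, ENNReal.ofReal (psi y) ∂μ) = ENNReal.ofReal (∫ y in E, psi y ∂μ) :=
      (ofReal_integral_eq_lintegral_ofReal hψ_int.restrict (ae_restrict_of_ae hψ0)).symm
    rw [h1, hcdef, hlin, ENNReal.ofReal_div_of_pos hIψ_pos, ENNReal.div_eq_inv_mul]
  rw [hmbE, hmE]

/-- Under (A2)–(A3), the ground-state data with the spectral-gap estimate
and finite heat content, the measure `m = ψ₀ dμ / ∫ψ₀ dμ` is a quasi-stationary measure of
`{U_t}`, and it is the unique quasi-stationary probability measure `m̄` with `m̄(φ₀) > 0`;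
analogously `m* = φ₀ dμ / ∫φ₀ dμ` for `{U_t^*}` among `m̄` with `m̄(ψ₀) > 0`. -/
theorem statement5
    [TopologicalSpace M] [PolishSpace M] [LocallyCompactSpace M]
    [MeasurableSpace M] [BorelSpace M]
    (μ : Measure M) [IsLocallyFiniteMeasure μ] [Measure.IsOpenPosMeasure μ] [SigmaFinite μ]
    (u : ℝ → M → M → ℝ)
    (hu_nonneg : ∀ t, 0 < t → ∀ x y, 0 ≤ u t x y)
    (hu_meas : ∀ t, 0 < t → Measurable (Function.uncurry (u t)))
    (hCK : ∀ s t : ℝ, 0 < s → 0 < t → ∀ x y,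
      u (s + t) x y = ∫ z, u s x z * u t z y ∂μ)
    (t₀ : ℝ) (ht₀ : 0 < t₀)
    (hA2 : ∀ t, 0 < t → ∀ f : M → ℝ, Measurable f → (∃ C, ∀ x, |f x| ≤ C) →
      Continuous (Uop μ u t f) ∧ (∃ C, ∀ x, |Uop μ u t f x| ≤ C) ∧
      Continuous (Ustar μ u t f) ∧ (∃ C, ∀ x, |Ustar μ u t f x| ≤ C))
    (hA3 : (∃ C, ∀ᵐ x ∂μ, ∫ y, (u t₀ x y) ^ 2 ∂μ ≤ C) ∧
      (∃ C, ∀ᵐ y ∂μ, ∫ x, (u t₀ x y) ^ 2 ∂μ ≤ C))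
    (lam : ℝ) (phi psi : M → ℝ)
    (hphi_cont : Continuous phi) (hphi_bdd : ∃ C, ∀ x, |phi x| ≤ C)
    (hphi_L2 : MemLp phi 2 μ) (hphi_pos : ∀ᵐ x ∂μ, 0 < phi x)
    (hpsi_cont : Continuous psi) (hpsi_bdd : ∃ C, ∀ x, |psi x| ≤ C)
    (hpsi_L2 : MemLp psi 2 μ) (hpsi_pos : ∀ᵐ x ∂μ, 0 < psi x)
    (hphi_eig : ∀ t, 0 < t → ∀ x, Uop μ u t phi x = Real.exp (-(lam * t)) * phi x)
    (hpsi_eig : ∀ t, 0 < t → ∀ y, Ustar μ u t psi y = Real.exp (-(lam * t)) * psi y)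
    (hLam_int : Integrable (fun x => phi x * psi x) μ)
    (hLam_pos : 0 < ∫ x, phi x * psi x ∂μ)
    (C₀ γ : ℝ) (hC₀ : 0 < C₀) (hγ : 0 < γ)
    (hgap : ∀ t, 2 * t₀ < t → ∀ᵐ q ∂(μ.prod μ),
      |Real.exp (lam * t) * u t q.1 q.2 -
        (∫ x, phi x * psi x ∂μ)⁻¹ * (phi q.1 * psi q.2)| ≤ C₀ * Real.exp (-(γ * t)))
    (t₁ : ℝ) (ht₁ : t₀ ≤ t₁)
    (hZ : heatContent μ u t₁ < ⊤) :
    (IsQSM μ u ((∫⁻ x, ENNReal.ofReal (psi x) ∂μ)⁻¹ • μ.withDensity fun x => ENNReal.ofReal (psi x)) ∧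
      ∀ mb : Measure M, IsProbabilityMeasure mb → IsQSM μ u mb →
        0 < ∫ x, phi x ∂mb → mb = ((∫⁻ x, ENNReal.ofReal (psi x) ∂μ)⁻¹ • μ.withDensity fun x => ENNReal.ofReal (psi x))) ∧
    (IsQSMstar μ u ((∫⁻ x, ENNReal.ofReal (phi x) ∂μ)⁻¹ • μ.withDensity fun x => ENNReal.ofReal (phi x)) ∧
      ∀ mb : Measure M, IsProbabilityMeasure mb → IsQSMstar μ u mb →
        0 < ∫ x, psi x ∂mb → mb = ((∫⁻ x, ENNReal.ofReal (phi x) ∂μ)⁻¹ • μ.withDensity fun x => ENNReal.ofReal (phi x))) := by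
  
  classical
  have hΛcomm : (∫ x, psi x * phi x ∂μ) = ∫ x, phi x * psi x ∂μ := by
    congr 1; funext x; ring
  have k1 := key μ u hu_nonneg hu_meas hCK t₀ ht₀
    (fun t ht f hf hb => ⟨(hA2 t ht f hf hb).1, (hA2 t ht f hf hb).2.1⟩)
    lam phi psi hphi_cont hphi_bdd hpsi_cont hpsi_bdd hpsi_pos hpsi_eig hLam_pos
    C₀ γ hC₀ hγ hgap t₁ (lt_of_lt_of_le ht₀ ht₁) hZ
  -- transposed kernel
  have hv_nonneg : ∀ t, 0 < t → ∀ x y, 0 ≤ (fun t x y => u t y x) t x y :=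
    fun t ht x y => hu_nonneg t ht y x
  have hv_meas : ∀ t, 0 < t → Measurable (Function.uncurry ((fun t x y => u t y x) t)) := by
    intro t ht
    exact (hu_meas t ht).comp measurable_swap
  have hv_CK : ∀ s t : ℝ, 0 < s → 0 < t → ∀ x y,
      (fun t x y => u t y x) (s + t) x y
        = ∫ z, (fun t x y => u t y x) s x z * (fun t x y => u t y x) t z y ∂μ := by
    intro s t hs ht x y
    show u (s + t) y x = ∫ z, u s z x * u t y z ∂μ
    rw [add_comm, hCK t s ht hs y x]
    congr 1; funext z; ring
  have hv_A2 : ∀ t, 0 < t → ∀ f : M → ℝ, Measurable f → (∃ C, ∀ x, |f x| ≤ C) →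
      Continuous (Uop μ (fun t x y => u t y x) t f) ∧
        (∃ C, ∀ x, |Uop μ (fun t x y => u t y x) t f x| ≤ C) := by
    intro t ht f hf hb
    exact ⟨(hA2 t ht f hf hb).2.2.1, (hA2 t ht f hf hb).2.2.2⟩
  have hv_eig : ∀ t, 0 < t → ∀ y,
      Ustar μ (fun t x y => u t y x) t phi y = Real.exp (-(lam * t)) * phi y :=
    fun t ht y => hphi_eig t ht y
  have hv_gap : ∀ t, 2 * t₀ < t → ∀ᵐ q ∂(μ.prod μ),
      |Real.exp (lam * t) * (fun t x y => u t y x) t q.1 q.2 -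
        (∫ x, psi x * phi x ∂μ)⁻¹ * (psi q.1 * phi q.2)| ≤ C₀ * Real.exp (-(γ * t)) := by
    intro t ht
    have h := (Measure.measurePreserving_swap (μ := μ) (ν := μ)).quasiMeasurePreserving.ae
      (hgap t ht)
    filter_upwards [h] with q hq
    rw [hΛcomm]
    have : psi q.1 * phi q.2 = phi (Prod.swap q).1 * psi (Prod.swap q).2 := by
      simp [Prod.swap, mul_comm]
    rw [this]
    exact hq
  have hv_Z : heatContent μ (fun t x y => u t y x) t₁ < ⊤ := by
    have hmeas : AEMeasurable (Function.uncurry fun x y : M => ENNReal.ofReal (u t₁ y x))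
        (μ.prod μ) := by
      exact (((hu_meas t₁ (lt_of_lt_of_le ht₀ ht₁)).comp measurable_swap).ennreal_ofReal).aemeasurable
    have hsw : heatContent μ (fun t x y => u t y x) t₁
        = ∫⁻ y, ∫⁻ x, ENNReal.ofReal (u t₁ y x) ∂μ ∂μ := lintegral_lintegral_swap hmeas
    rw [hsw]
    exact hZ
  have k2 := key μ (fun t x y => u t y x) hv_nonneg hv_meas hv_CK t₀ ht₀ hv_A2
    lam psi phi hpsi_cont hpsi_bdd hphi_cont hphi_bdd hphi_pos hv_eig
    (hΛcomm ▸ hLam_pos) C₀ γ hC₀ hγ hv_gap t₁ (lt_of_lt_of_le ht₀ ht₁) hv_Z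
  exact ⟨⟨k1.1, fun mb h1 h2 h3 => k1.2 mb h1 h2 h3⟩,
    ⟨k2.1, fun mb h1 h2 h3 => k2.2 mb h1 h2 h3⟩⟩
end
end

section
/- Assume (A2)–(A3) for some t₀ > 0 and the ground state data. If there is a constant C > 0 such that sup_{x ∈ M∖N} |U_t φ₀(x)/U_t 1_M(x) − C| → 0 as t → ∞, then the semigroup {U_t} is aGSD, i.e. there exist constants C₁, t₁ > 0 with U_t 1_M(x) ≤ C₁ e^{−λ₀ t} φ₀(x) for all t ≥ t₁ and all x ∈ M. -/
open MeasureTheory Real Set Filter Topology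
open scoped ENNReal NNReal

noncomputable section

variable {M : Type*}

/-- If `sup_(x ∈ M∖N) |U_t φ₀(x)/U_t 1(x) - C| → 0` as `t → ∞` for some
constant `C > 0`, then `{U_t}` is aGSD. -/
theorem statement8
    [TopologicalSpace M] [PolishSpace M] [LocallyCompactSpace M]
    [MeasurableSpace M] [BorelSpace M]
    (μ : Measure M) [IsLocallyFiniteMeasure μ] [Measure.IsOpenPosMeasure μ] [SigmaFinite μ]
    (u : ℝ → M → M → ℝ)
    (hu_nonneg : ∀ t, 0 < t → ∀ x y, 0 ≤ u t x y)
    (hu_meas : ∀ t, 0 < t → Measurable (Function.uncurry (u t)))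
    (hCK : ∀ s t : ℝ, 0 < s → 0 < t → ∀ x y,
      u (s + t) x y = ∫ z, u s x z * u t z y ∂μ)
    (t₀ : ℝ) (ht₀ : 0 < t₀)
    (hA2 : ∀ t, 0 < t → ∀ f : M → ℝ, Measurable f → (∃ C, ∀ x, |f x| ≤ C) →
      Continuous (Uop μ u t f) ∧ (∃ C, ∀ x, |Uop μ u t f x| ≤ C) ∧
      Continuous (Ustar μ u t f) ∧ (∃ C, ∀ x, |Ustar μ u t f x| ≤ C))
    (hA3 : (∃ C, ∀ᵐ x ∂μ, ∫ y, (u t₀ x y) ^ 2 ∂μ ≤ C) ∧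
      (∃ C, ∀ᵐ y ∂μ, ∫ x, (u t₀ x y) ^ 2 ∂μ ≤ C))
    (lam : ℝ) (phi psi : M → ℝ)
    (hphi_cont : Continuous phi) (hphi_bdd : ∃ C, ∀ x, |phi x| ≤ C)
    (hphi_L2 : MemLp phi 2 μ) (hphi_pos : ∀ᵐ x ∂μ, 0 < phi x)
    (hpsi_cont : Continuous psi) (hpsi_bdd : ∃ C, ∀ x, |psi x| ≤ C)
    (hpsi_L2 : MemLp psi 2 μ) (hpsi_pos : ∀ᵐ x ∂μ, 0 < psi x)
    (hphi_eig : ∀ t, 0 < t → ∀ x, Uop μ u t phi x = Real.exp (-(lam * t)) * phi x)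
    (hpsi_eig : ∀ t, 0 < t → ∀ y, Ustar μ u t psi y = Real.exp (-(lam * t)) * psi y)
    (C : ℝ) (hC : 0 < C)
    (hconv : ∀ ε : ℝ, 0 < ε → ∃ T : ℝ, ∀ t, T ≤ t → ∀ x, x ∉ ({x | phi x = 0} ∪ {x | psi x = 0}) →
      |Uop μ u t phi x / Uop μ u t (fun _ => (1 : ℝ)) x - C| ≤ ε) :
    ∃ C₁ : ℝ, 0 < C₁ ∧ ∃ t₁ : ℝ, 0 < t₁ ∧
      ∀ t, t₁ ≤ t → ∀ x, Uop μ u t (fun _ => (1 : ℝ)) x ≤ C₁ * Real.exp (-(lam * t)) * phi x := by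
  classical
  -- φ is nonnegative everywhere
  have hphi_nonneg : ∀ x, 0 ≤ phi x := by
    intro x
    by_contra hx
    push_neg at hx
    have hopen : IsOpen {y | phi y < 0} := isOpen_lt hphi_cont continuous_const
    have hne : ({y | phi y < 0} : Set M).Nonempty := ⟨x, hx⟩
    have hpos := hopen.measure_pos μ hne
    have hzero : μ {y | phi y < 0} = 0 := by
      have : {y | phi y < 0} ⊆ {y | ¬ 0 < phi y} := fun y hy => not_lt.mpr hy.le
      exact measure_mono_null this hphi_pos
    exact hpos.ne' hzero
  obtain ⟨T, hT⟩ := hconv (C / 2) (by positivity)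
  refine ⟨2 / C, by positivity, max T 1, lt_of_lt_of_le one_pos (le_max_right _ _), ?_⟩
  intro t ht x
  have ht' : (0 : ℝ) < t := lt_of_lt_of_le one_pos ((le_max_right T 1).trans ht)
  set N : Set M := {x | phi x = 0} ∪ {x | psi x = 0} with hN
  -- key inequality off N
  have hkey : ∀ y, y ∉ N →
      Uop μ u t (fun _ => (1 : ℝ)) y ≤ 2 / C * Real.exp (-(lam * t)) * phi y := by
    intro y hy
    have ha : 0 ≤ Uop μ u t (fun _ => (1 : ℝ)) y :=
      integral_nonneg fun z => by
        have := hu_nonneg t ht' y z; simpa using this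
    rcases eq_or_lt_of_le ha with ha0 | hapos
    · rw [← ha0]
      have : 0 ≤ phi y := hphi_nonneg y
      positivity
    · have hb := hT t ((le_max_left T 1).trans ht) y hy
      have hratio : C / 2 ≤ Uop μ u t phi y / Uop μ u t (fun _ => (1 : ℝ)) y := by
        have := abs_le.mp hb
        linarith [this.1]
      have hmul : C / 2 * Uop μ u t (fun _ => (1 : ℝ)) y ≤ Uop μ u t phi y := by
        have := mul_le_mul_of_nonneg_right hratio hapos.le
        rwa [div_mul_cancel₀ _ hapos.ne'] at this
      have heig := hphi_eig t ht' y
      rw [heig] at hmul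
      calc Uop μ u t (fun _ => (1 : ℝ)) y
          = 2 / C * (C / 2 * Uop μ u t (fun _ => (1 : ℝ)) y) := by
            field_simp
        _ ≤ 2 / C * (Real.exp (-(lam * t)) * phi y) := by
            apply mul_le_mul_of_nonneg_left hmul (by positivity)
        _ = 2 / C * Real.exp (-(lam * t)) * phi y := by ring
  -- the set where the inequality holds is closed
  have hcont1 : Continuous (Uop μ u t (fun _ => (1 : ℝ))) :=
    (hA2 t ht' (fun _ => (1 : ℝ)) measurable_const ⟨1, fun _ => by simp⟩).1
  have hclosed : IsClosed {y | Uop μ u t (fun _ => (1 : ℝ)) y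
      ≤ 2 / C * Real.exp (-(lam * t)) * phi y} :=
    isClosed_le hcont1 (by fun_prop)
  -- N has measure zero, hence empty interior, hence Nᶜ is dense
  have hNnull : μ N = 0 := by
    apply measure_union_null
    · exact measure_mono_null (fun y (hy : phi y = 0) => not_lt.mpr (le_of_eq hy))
        (ae_iff.mp hphi_pos)
    · exact measure_mono_null (fun y (hy : psi y = 0) => not_lt.mpr (le_of_eq hy))
        (ae_iff.mp hpsi_pos)
  have hdense : Dense Nᶜ := by
    rw [← interior_eq_empty_iff_dense_compl]
    by_contra h
    obtain ⟨y, hy⟩ := Set.nonempty_iff_ne_empty.mpr h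
    have hpos := isOpen_interior.measure_pos μ ⟨y, hy⟩
    exact hpos.ne' (measure_mono_null interior_subset hNnull)
  have hsub : Nᶜ ⊆ {y | Uop μ u t (fun _ => (1 : ℝ)) y
      ≤ 2 / C * Real.exp (-(lam * t)) * phi y} := fun y hy => hkey y hy
  exact hclosed.closure_subset (closure_mono hsub (hdense x))
end
end

section
/- Let M be noncompact. Assume (A2)–(A3) for some t₀ > 0, the ground state data with the spectral-gap kernel estimate (constants C₀, γ), with φ₀ and ψ₀ strictly positive everywhere on M (N = ∅). Let {K_t : t ≥ t₀} be an exhausting family of compact sets, and let η : [t̃₀,∞) → [t₀,∞) be an increasing function with η(t) → ∞ as t → ∞ and e^{γ t}·min(inf_{x ∈ K_{η(t)}} φ₀(x), inf_{x ∈ K_{η(t)}} ψ₀(x)) ≥ 1 for all t ≥ t̃₀. If Z(t₁) < ∞ for some t₁ ≥ t₀, then both semigroups are pGSD for the exhausting family {K_{η(t)}}: there exist C > 0 and T > 0 such that U_t 1_M(x) ≤ C e^{−λ₀ t} φ₀(x) and U_t* 1_M(x) ≤ C e^{−λ₀ t} ψ₀(x) for all t ≥ T and all x ∈ K_{η(t)}.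 -/
open MeasureTheory Real Set Filter Topology
open scoped ENNReal NNReal

noncomputable section

variable {M : Type*}

lemma ofReal_integral_le' {α : Type*} [MeasurableSpace α] (μ : Measure α) (f : α → ℝ)
    (hf : 0 ≤ᵐ[μ] f) :
    ENNReal.ofReal (∫ x, f x ∂μ) ≤ ∫⁻ x, ENNReal.ofReal (f x) ∂μ := by
  by_cases hi : Integrable f μ
  · exact le_of_eq (ofReal_integral_eq_lintegral_ofReal hi hf)
  · rw [integral_undef hi]; simp

lemma key_bound {α : Type*} [MeasurableSpace α] (μ : Measure α) [SigmaFinite μ]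
    (v w h : α → α → ℝ)
    (hv_meas : Measurable (Function.uncurry v))
    (hw_meas : Measurable (Function.uncurry w))
    (hv_nonneg : ∀ x y, 0 ≤ v x y)
    (hw_nonneg : ∀ x y, 0 ≤ w x y)
    (hCK : ∀ x y, h x y = ∫ z, v x z * w z y ∂μ)
    (f g : α → ℝ) (hg_meas : Measurable g)
    (hf_nonneg : ∀ x, 0 ≤ f x) (hg_nonneg : ∀ x, 0 ≤ g x)
    (a b : ℝ) (ha : 0 ≤ a)
    (hbound : ∀ᵐ q ∂(μ.prod μ), v q.1 q.2 ≤ a * f q.1 * g q.2 + b) :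
    ∀ᵐ x ∂μ, (∫⁻ y, ENNReal.ofReal (h x y) ∂μ) ≤
      ENNReal.ofReal (a * f x) *
        (∫⁻ z, ENNReal.ofReal (g z) * (∫⁻ y, ENNReal.ofReal (w z y) ∂μ) ∂μ)
      + ENNReal.ofReal b * (∫⁻ z, ∫⁻ y, ENNReal.ofReal (w z y) ∂μ ∂μ) := by
  set L : α → ℝ≥0∞ := fun z => ∫⁻ y, ENNReal.ofReal (w z y) ∂μ with hL
  have hw_meas' : Measurable (fun q : α × α => ENNReal.ofReal (w q.1 q.2)) :=
    ENNReal.measurable_ofReal.comp hw_meas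
  have hL_meas : Measurable L := hw_meas'.lintegral_prod_right'
  have step1 : ∀ x, (∫⁻ y, ENNReal.ofReal (h x y) ∂μ) ≤
      ∫⁻ z, ENNReal.ofReal (v x z) * L z ∂μ := by
    intro x
    have hvx : Measurable (v x) := hv_meas.of_uncurry_left
    have h1 : ∀ y, ENNReal.ofReal (h x y) ≤ ∫⁻ z, ENNReal.ofReal (v x z * w z y) ∂μ := by
      intro y
      rw [hCK x y]
      exact ofReal_integral_le' μ _ (Filter.Eventually.of_forall fun z =>
        mul_nonneg (hv_nonneg x z) (hw_nonneg z y))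
    calc (∫⁻ y, ENNReal.ofReal (h x y) ∂μ)
        ≤ ∫⁻ y, ∫⁻ z, ENNReal.ofReal (v x z * w z y) ∂μ ∂μ := lintegral_mono h1
      _ = ∫⁻ z, ∫⁻ y, ENNReal.ofReal (v x z * w z y) ∂μ ∂μ := by
          refine lintegral_lintegral_swap ?_
          apply Measurable.aemeasurable
          apply ENNReal.measurable_ofReal.comp
          exact (hvx.comp measurable_snd).mul (hw_meas.comp (measurable_snd.prodMk measurable_fst))
      _ = ∫⁻ z, ENNReal.ofReal (v x z) * L z ∂μ := by
          refine lintegral_congr fun z => ?_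
          rw [hL]
          rw [← lintegral_const_mul _ (hw_meas.of_uncurry_left).ennreal_ofReal]
          exact lintegral_congr fun y => ENNReal.ofReal_mul (hv_nonneg x z)
  have hae : ∀ᵐ x ∂μ, ∀ᵐ z ∂μ, v x z ≤ a * f x * g z + b :=
    Measure.ae_ae_of_ae_prod hbound
  filter_upwards [hae] with x hx
  refine (step1 x).trans ?_
  have step2 : (∫⁻ z, ENNReal.ofReal (v x z) * L z ∂μ) ≤
      ∫⁻ z, (ENNReal.ofReal (a * f x) * ENNReal.ofReal (g z) + ENNReal.ofReal b) * L z ∂μ := by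
    refine lintegral_mono_ae ?_
    filter_upwards [hx] with z hz
    refine mul_le_mul_left ?_ _
    calc ENNReal.ofReal (v x z) ≤ ENNReal.ofReal (a * f x * g z + b) := ENNReal.ofReal_le_ofReal hz
      _ ≤ ENNReal.ofReal (a * f x * g z) + ENNReal.ofReal b := ENNReal.ofReal_add_le
      _ = ENNReal.ofReal (a * f x) * ENNReal.ofReal (g z) + ENNReal.ofReal b := by
          rw [ENNReal.ofReal_mul (mul_nonneg ha (hf_nonneg x))]
  refine step2.trans (le_of_eq ?_)
  have hgL : Measurable (fun z => ENNReal.ofReal (g z) * L z) :=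
    (ENNReal.measurable_ofReal.comp hg_meas).mul hL_meas
  calc (∫⁻ z, (ENNReal.ofReal (a * f x) * ENNReal.ofReal (g z) + ENNReal.ofReal b) * L z ∂μ)
      = ∫⁻ z, ENNReal.ofReal (a * f x) * (ENNReal.ofReal (g z) * L z)
          + ENNReal.ofReal b * L z ∂μ := by
        refine lintegral_congr fun z => ?_; ring
    _ = ENNReal.ofReal (a * f x) * (∫⁻ z, ENNReal.ofReal (g z) * L z ∂μ)
          + ENNReal.ofReal b * (∫⁻ z, L z ∂μ) := by
        rw [lintegral_add_left ((hgL.const_mul _))]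
        rw [lintegral_const_mul _ hgL, lintegral_const_mul _ hL_meas]


set_option maxHeartbeats 2000000 in
/-- On a noncompact space, finite heat content implies that both
semigroups are pGSD for the exhausting family `{K_(η(t))}`. -/
theorem statement10
    [TopologicalSpace M] [PolishSpace M] [LocallyCompactSpace M]
    [MeasurableSpace M] [BorelSpace M]
    (μ : Measure M) [IsLocallyFiniteMeasure μ] [Measure.IsOpenPosMeasure μ] [SigmaFinite μ]
    (hnc : ¬ CompactSpace M)
    (u : ℝ → M → M → ℝ)
    (hu_nonneg : ∀ t, 0 < t → ∀ x y, 0 ≤ u t x y)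
    (hu_meas : ∀ t, 0 < t → Measurable (Function.uncurry (u t)))
    (hCK : ∀ s t : ℝ, 0 < s → 0 < t → ∀ x y,
      u (s + t) x y = ∫ z, u s x z * u t z y ∂μ)
    (t₀ : ℝ) (ht₀ : 0 < t₀)
    (hA2 : ∀ t, 0 < t → ∀ f : M → ℝ, Measurable f → (∃ C, ∀ x, |f x| ≤ C) →
      Continuous (Uop μ u t f) ∧ (∃ C, ∀ x, |Uop μ u t f x| ≤ C) ∧
      Continuous (Ustar μ u t f) ∧ (∃ C, ∀ x, |Ustar μ u t f x| ≤ C))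
    (hA3 : (∃ C, ∀ᵐ x ∂μ, ∫ y, (u t₀ x y) ^ 2 ∂μ ≤ C) ∧
      (∃ C, ∀ᵐ y ∂μ, ∫ x, (u t₀ x y) ^ 2 ∂μ ≤ C))
    (lam : ℝ) (phi psi : M → ℝ)
    (hphi_cont : Continuous phi) (hphi_bdd : ∃ C, ∀ x, |phi x| ≤ C)
    (hphi_L2 : MemLp phi 2 μ) (hphi_pos : ∀ x, 0 < phi x)
    (hpsi_cont : Continuous psi) (hpsi_bdd : ∃ C, ∀ x, |psi x| ≤ C)
    (hpsi_L2 : MemLp psi 2 μ) (hpsi_pos : ∀ x, 0 < psi x)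
    (hphi_eig : ∀ t, 0 < t → ∀ x, Uop μ u t phi x = Real.exp (-(lam * t)) * phi x)
    (hpsi_eig : ∀ t, 0 < t → ∀ y, Ustar μ u t psi y = Real.exp (-(lam * t)) * psi y)
    (hLam_int : Integrable (fun x => phi x * psi x) μ)
    (hLam_pos : 0 < ∫ x, phi x * psi x ∂μ)
    (C₀ γ : ℝ) (hC₀ : 0 < C₀) (hγ : 0 < γ)
    (hgap : ∀ t, 2 * t₀ < t → ∀ᵐ q ∂(μ.prod μ),
      |Real.exp (lam * t) * u t q.1 q.2 -
        (∫ x, phi x * psi x ∂μ)⁻¹ * (phi q.1 * psi q.2)| ≤ C₀ * Real.exp (-(γ * t)))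
    (K : ℝ → Set M) (hK : ExhaustingFamily t₀ K)
    (ttil : ℝ) (η : ℝ → ℝ)
    (hη_cod : ∀ t, ttil ≤ t → t₀ ≤ η t)
    (hη_mono : ∀ s t, ttil ≤ s → s ≤ t → η s ≤ η t)
    (hη_tendsto : Tendsto η atTop atTop)
    (hη_ineq : ∀ t, ttil ≤ t →
      1 ≤ Real.exp (γ * t) * min (sInf (phi '' K (η t))) (sInf (psi '' K (η t))))
    (t₁ : ℝ) (ht₁ : t₀ ≤ t₁)
    (hZ : heatContent μ u t₁ < ⊤) :
    ∃ C : ℝ, 0 < C ∧ ∃ T : ℝ, ∀ t, T ≤ t → ∀ x ∈ K (η t),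
      Uop μ u t (fun _ => (1 : ℝ)) x ≤ C * Real.exp (-(lam * t)) * phi x ∧
      Ustar μ u t (fun _ => (1 : ℝ)) x ≤ C * Real.exp (-(lam * t)) * psi x := by
  
  classical
  obtain ⟨Cφ, hCφ⟩ := hphi_bdd
  obtain ⟨Cψ, hCψ⟩ := hpsi_bdd
  have ht₁pos : 0 < t₁ := lt_of_lt_of_le ht₀ ht₁
  have hΛinv : 0 < (∫ x, phi x * psi x ∂μ)⁻¹ := inv_pos.mpr hLam_pos
  set Λi : ℝ := (∫ x, phi x * psi x ∂μ)⁻¹ with hΛi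
  -- measurability basics
  have hu1meas : Measurable (fun q : M × M => ENNReal.ofReal (u t₁ q.1 q.2)) :=
    (hu_meas t₁ ht₁pos).ennreal_ofReal
  have hL_meas : Measurable (fun z => ∫⁻ y, ENNReal.ofReal (u t₁ z y) ∂μ) :=
    hu1meas.lintegral_prod_right'
  have hG_meas : Measurable (fun z => ∫⁻ y, ENNReal.ofReal (u t₁ y z) ∂μ) := by
    have : Measurable (fun q : M × M => ENNReal.ofReal (u t₁ q.2 q.1)) :=
      hu1meas.comp measurable_swap
    exact this.lintegral_prod_right'
  -- the ENNReal constants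
  set Zen : ℝ≥0∞ := heatContent μ u t₁ with hZen
  set Ben : ℝ≥0∞ :=
    ∫⁻ z, ENNReal.ofReal (psi z) * (∫⁻ y, ENNReal.ofReal (u t₁ z y) ∂μ) ∂μ with hBen
  set Bsen : ℝ≥0∞ :=
    ∫⁻ z, ENNReal.ofReal (phi z) * (∫⁻ y, ENNReal.ofReal (u t₁ y z) ∂μ) ∂μ with hBsen
  have hZsen_eq : (∫⁻ z, ∫⁻ y, ENNReal.ofReal (u t₁ y z) ∂μ ∂μ) = Zen := by
    rw [hZen]
    exact lintegral_lintegral_swap (f := fun z y => ENNReal.ofReal (u t₁ y z))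
      (hu1meas.comp measurable_swap).aemeasurable
  have hBen_fin : Ben ≠ ⊤ := by
    have : Ben ≤ ENNReal.ofReal Cψ * Zen := by
      rw [hBen, hZen]
      calc (∫⁻ z, ENNReal.ofReal (psi z) * (∫⁻ y, ENNReal.ofReal (u t₁ z y) ∂μ) ∂μ)
          ≤ ∫⁻ z, ENNReal.ofReal Cψ * (∫⁻ y, ENNReal.ofReal (u t₁ z y) ∂μ) ∂μ := by
            refine lintegral_mono fun z => mul_le_mul_left (ENNReal.ofReal_le_ofReal ?_) _
            exact (le_abs_self _).trans (hCψ z)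
        _ = ENNReal.ofReal Cψ * heatContent μ u t₁ := lintegral_const_mul _ hL_meas
    exact (this.trans_lt (ENNReal.mul_lt_top ENNReal.ofReal_lt_top hZ)).ne
  have hBsen_fin : Bsen ≠ ⊤ := by
    have : Bsen ≤ ENNReal.ofReal Cφ * Zen := by
      rw [hBsen]
      calc (∫⁻ z, ENNReal.ofReal (phi z) * (∫⁻ y, ENNReal.ofReal (u t₁ y z) ∂μ) ∂μ)
          ≤ ∫⁻ z, ENNReal.ofReal Cφ * (∫⁻ y, ENNReal.ofReal (u t₁ y z) ∂μ) ∂μ := by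
            refine lintegral_mono fun z => mul_le_mul_left (ENNReal.ofReal_le_ofReal ?_) _
            exact (le_abs_self _).trans (hCφ z)
        _ = ENNReal.ofReal Cφ * Zen := by rw [lintegral_const_mul _ hG_meas, hZsen_eq]
    exact (this.trans_lt (ENNReal.mul_lt_top ENNReal.ofReal_lt_top hZ)).ne
  -- real constants
  set B' : ℝ := Ben.toReal with hB'
  set Bs' : ℝ := Bsen.toReal with hBs'
  set Z' : ℝ := Zen.toReal with hZ'
  have hB'0 : 0 ≤ B' := ENNReal.toReal_nonneg
  have hBs'0 : 0 ≤ Bs' := ENNReal.toReal_nonneg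
  have hZ'0 : 0 ≤ Z' := ENNReal.toReal_nonneg
  set C : ℝ := Real.exp (lam * t₁) * (Λi * (B' + Bs') + C₀ * Real.exp (γ * t₁) * Z') + 1
    with hCdef
  have hCpos : 0 < C := by
    have h1 : 0 ≤ Real.exp (lam * t₁) * (Λi * (B' + Bs') + C₀ * Real.exp (γ * t₁) * Z') := by
      apply mul_nonneg (Real.exp_pos _).le
      have := mul_nonneg hΛinv.le (add_nonneg hB'0 hBs'0)
      have := mul_nonneg (mul_nonneg hC₀.le (Real.exp_pos (γ * t₁)).le) hZ'0
      rw [hΛi] at *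
      nlinarith
    rw [hCdef]; linarith
  refine ⟨C, hCpos, max ttil (t₁ + 2 * t₀ + 1), fun t ht x hxK => ?_⟩
  have htt : ttil ≤ t := le_trans (le_max_left _ _) ht
  have hts : 2 * t₀ < t - t₁ := by
    have := le_trans (le_max_right _ _) ht; linarith
  have hspos : 0 < t - t₁ := by linarith
  have htpos : 0 < t := by linarith
  -- constants for this t
  set a : ℝ := Real.exp (-(lam * (t - t₁))) * Λi with ha_def
  set b : ℝ := Real.exp (-(lam * (t - t₁))) * (C₀ * Real.exp (-(γ * (t - t₁)))) with hb_def
  have ha0 : 0 ≤ a := mul_nonneg (Real.exp_pos _).le hΛinv.le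
  have hb0 : 0 ≤ b := mul_nonneg (Real.exp_pos _).le
    (mul_nonneg hC₀.le (Real.exp_pos _).le)
  -- the gap bound in usable form
  have hbound : ∀ᵐ q ∂(μ.prod μ),
      u (t - t₁) q.1 q.2 ≤ a * phi q.1 * psi q.2 + b := by
    filter_upwards [hgap (t - t₁) hts] with q hq
    have h2 := (abs_le.mp hq).2
    have he : Real.exp (-(lam * (t - t₁))) * Real.exp (lam * (t - t₁)) = 1 := by
      rw [← Real.exp_add, neg_add_cancel, Real.exp_zero]
    have h5 : Real.exp (lam * (t - t₁)) * u (t - t₁) q.1 q.2 ≤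
        Λi * (phi q.1 * psi q.2) + C₀ * Real.exp (-(γ * (t - t₁))) := by linarith
    rw [ha_def, hb_def]
    calc u (t - t₁) q.1 q.2
        = Real.exp (-(lam * (t - t₁))) * (Real.exp (lam * (t - t₁)) * u (t - t₁) q.1 q.2) := by
          rw [← mul_assoc, he, one_mul]
      _ ≤ Real.exp (-(lam * (t - t₁))) * (Λi * (phi q.1 * psi q.2)
            + C₀ * Real.exp (-(γ * (t - t₁)))) :=
          mul_le_mul_of_nonneg_left h5 (Real.exp_pos _).le
      _ = Real.exp (-(lam * (t - t₁))) * Λi * phi q.1 * psi q.2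
            + Real.exp (-(lam * (t - t₁))) * (C₀ * Real.exp (-(γ * (t - t₁)))) := by ring
  -- eta inequality consequences
  have hKcomp : IsCompact (K (η t)) := hK.1 _ (hη_cod t htt)
  have hinfφ : sInf (phi '' K (η t)) ≤ phi x :=
    csInf_le (hKcomp.image hphi_cont).bddBelow (Set.mem_image_of_mem _ hxK)
  have hinfψ : sInf (psi '' K (η t)) ≤ psi x :=
    csInf_le (hKcomp.image hpsi_cont).bddBelow (Set.mem_image_of_mem _ hxK)
  have hmin : Real.exp (-(γ * t)) ≤
      min (sInf (phi '' K (η t))) (sInf (psi '' K (η t))) := by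
    have hm := hη_ineq t htt
    have he : Real.exp (-(γ * t)) * Real.exp (γ * t) = 1 := by
      rw [← Real.exp_add, neg_add_cancel, Real.exp_zero]
    nlinarith [Real.exp_pos (-(γ * t)),
      mul_le_mul_of_nonneg_left hm (Real.exp_pos (-(γ * t))).le]
  have heγφ : Real.exp (-(γ * t)) ≤ phi x :=
    hmin.trans ((min_le_left _ _).trans hinfφ)
  have heγψ : Real.exp (-(γ * t)) ≤ psi x :=
    hmin.trans ((min_le_right _ _).trans hinfψ)
  -- exponential splittings
  have hea : Real.exp (-(lam * (t - t₁))) = Real.exp (-(lam * t)) * Real.exp (lam * t₁) := by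
    rw [← Real.exp_add]; congr 1; ring
  have heb : Real.exp (-(γ * (t - t₁))) = Real.exp (-(γ * t)) * Real.exp (γ * t₁) := by
    rw [← Real.exp_add]; congr 1; ring
  constructor
  -- ===== Uop side =====
  · have hkey := key_bound μ (u (t - t₁)) (u t₁) (u t)
      (hu_meas _ hspos) (hu_meas _ ht₁pos) (hu_nonneg _ hspos) (hu_nonneg _ ht₁pos)
      (fun x' y' => by
        have := hCK (t - t₁) t₁ hspos ht₁pos x' y'
        rwa [show t - t₁ + t₁ = t by ring] at this)
      phi psi hpsi_cont.measurable (fun x' => (hphi_pos x').le) (fun x' => (hpsi_pos x').le)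
      a b ha0 hbound
    rw [← hBen] at hkey
    have hkey' : ∀ᵐ x' ∂μ, Uop μ u t (fun _ => (1 : ℝ)) x' ≤ a * phi x' * B' + b * Z' := by
      filter_upwards [hkey] with x' hx'
      have heq : Uop μ u t (fun _ => (1 : ℝ)) x' =
          (∫⁻ y, ENNReal.ofReal (u t x' y) ∂μ).toReal := by
        simp only [Uop, mul_one]
        rw [integral_eq_lintegral_of_nonneg_ae
          (Filter.Eventually.of_forall fun y => hu_nonneg t htpos x' y)
          ((hu_meas t htpos).of_uncurry_left.aestronglyMeasurable)]
      rw [heq]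
      have hZen_eq : (∫⁻ z, ∫⁻ y, ENNReal.ofReal (u t₁ z y) ∂μ ∂μ) = Zen := rfl
      rw [hZen_eq] at hx'
      have hfin : ENNReal.ofReal (a * phi x') * Ben + ENNReal.ofReal b * Zen ≠ ⊤ :=
        ENNReal.add_ne_top.mpr
          ⟨ENNReal.mul_ne_top ENNReal.ofReal_ne_top hBen_fin,
           ENNReal.mul_ne_top ENNReal.ofReal_ne_top hZ.ne⟩
      calc (∫⁻ y, ENNReal.ofReal (u t x' y) ∂μ).toReal
          ≤ (ENNReal.ofReal (a * phi x') * Ben + ENNReal.ofReal b * Zen).toReal :=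
            ENNReal.toReal_mono hfin hx'
        _ = a * phi x' * B' + b * Z' := by
            rw [ENNReal.toReal_add (ENNReal.mul_ne_top ENNReal.ofReal_ne_top hBen_fin)
              (ENNReal.mul_ne_top ENNReal.ofReal_ne_top hZ.ne),
              ENNReal.toReal_mul, ENNReal.toReal_mul,
              ENNReal.toReal_ofReal (mul_nonneg ha0 (hphi_pos x').le),
              ENNReal.toReal_ofReal hb0]
    -- upgrade to everywhere using continuity
    have hcontU : Continuous (Uop μ u t (fun _ => (1 : ℝ))) :=
      (hA2 t htpos (fun _ => 1) measurable_const ⟨1, fun _ => by norm_num⟩).1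
    have hcontR : Continuous (fun x' => a * phi x' * B' + b * Z') :=
      ((continuous_const.mul hphi_cont).mul continuous_const).add continuous_const
    have hall : ∀ x', Uop μ u t (fun _ => (1 : ℝ)) x' ≤ a * phi x' * B' + b * Z' := by
      have hminf : (fun x' => min (Uop μ u t (fun _ => (1 : ℝ)) x')
          (a * phi x' * B' + b * Z')) = Uop μ u t (fun _ => (1 : ℝ)) := by
        refine μ.eq_of_ae_eq ?_ (hcontU.min hcontR) hcontU
        filter_upwards [hkey'] with x' hx'
        exact min_eq_left hx'
      intro x'
      exact min_eq_left_iff.mp (congrFun hminf x')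
    -- final arithmetic
    have h1 := hall x
    have hcoef : Real.exp (lam * t₁) * Λi * B'
        + Real.exp (lam * t₁) * C₀ * Real.exp (γ * t₁) * Z' ≤ C := by
      rw [hCdef]
      have h2 : 0 ≤ Real.exp (lam * t₁) * Λi * Bs' := by
        apply mul_nonneg (mul_nonneg (Real.exp_pos _).le hΛinv.le) hBs'0
      nlinarith
    have hprod : 0 ≤ Real.exp (-(lam * t)) * phi x :=
      mul_nonneg (Real.exp_pos _).le (hphi_pos x).le
    have hterm : Real.exp (-(lam * t)) * Real.exp (lam * t₁) * C₀ * Real.exp (γ * t₁) * Z'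
        * Real.exp (-(γ * t))
        ≤ Real.exp (-(lam * t)) * Real.exp (lam * t₁) * C₀ * Real.exp (γ * t₁) * Z' * phi x := by
      apply mul_le_mul_of_nonneg_left heγφ
      have := mul_nonneg (mul_nonneg (mul_nonneg (mul_nonneg (Real.exp_pos (-(lam * t))).le
        (Real.exp_pos (lam * t₁)).le) hC₀.le) (Real.exp_pos (γ * t₁)).le) hZ'0
      exact this
    have h3 := mul_le_mul_of_nonneg_right hcoef hprod
    calc Uop μ u t (fun _ => (1 : ℝ)) x ≤ a * phi x * B' + b * Z' := h1
      _ ≤ C * Real.exp (-(lam * t)) * phi x := by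
          rw [ha_def, hb_def, hea, heb]
          linarith [hterm, h3]
  -- ===== Ustar side =====
  · have hCKstar : ∀ x' y, u t y x' = ∫ z, u (t - t₁) z x' * u t₁ y z ∂μ := by
      intro x' y
      have h0 := hCK t₁ (t - t₁) ht₁pos hspos y x'
      rw [show t₁ + (t - t₁) = t by ring] at h0
      rw [h0]
      exact integral_congr_ae (Filter.Eventually.of_forall fun z => mul_comm _ _)
    have hboundstar : ∀ᵐ q ∂(μ.prod μ),
        u (t - t₁) q.2 q.1 ≤ a * psi q.1 * phi q.2 + b := by
      have hsw := (Measure.measurePreserving_swap (μ := μ) (ν := μ)).quasiMeasurePreserving.ae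
        hbound
      filter_upwards [hsw] with q hq
      simp only [Prod.fst_swap, Prod.snd_swap] at hq
      exact hq.trans (le_of_eq (by ring))
    have hkey := key_bound μ (fun x' z => u (t - t₁) z x') (fun z y => u t₁ y z)
      (fun x' y => u t y x')
      ((hu_meas _ hspos).comp measurable_swap) ((hu_meas _ ht₁pos).comp measurable_swap)
      (fun x' y => hu_nonneg _ hspos y x') (fun x' y => hu_nonneg _ ht₁pos y x')
      (fun x' y => hCKstar x' y)
      psi phi hphi_cont.measurable (fun x' => (hpsi_pos x').le) (fun x' => (hphi_pos x').le)
      a b ha0 hboundstar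
    rw [← hBsen, hZsen_eq] at hkey
    have hkey' : ∀ᵐ x' ∂μ, Ustar μ u t (fun _ => (1 : ℝ)) x' ≤ a * psi x' * Bs' + b * Z' := by
      filter_upwards [hkey] with x' hx'
      have heq : Ustar μ u t (fun _ => (1 : ℝ)) x' =
          (∫⁻ y, ENNReal.ofReal (u t y x') ∂μ).toReal := by
        simp only [Ustar, mul_one]
        rw [integral_eq_lintegral_of_nonneg_ae
          (Filter.Eventually.of_forall fun y => hu_nonneg t htpos y x')
          ((hu_meas t htpos).of_uncurry_right.aestronglyMeasurable)]
      rw [heq]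
      have hfin : ENNReal.ofReal (a * psi x') * Bsen + ENNReal.ofReal b * Zen ≠ ⊤ :=
        ENNReal.add_ne_top.mpr
          ⟨ENNReal.mul_ne_top ENNReal.ofReal_ne_top hBsen_fin,
           ENNReal.mul_ne_top ENNReal.ofReal_ne_top hZ.ne⟩
      calc (∫⁻ y, ENNReal.ofReal (u t y x') ∂μ).toReal
          ≤ (ENNReal.ofReal (a * psi x') * Bsen + ENNReal.ofReal b * Zen).toReal :=
            ENNReal.toReal_mono hfin hx'
        _ = a * psi x' * Bs' + b * Z' := by
            rw [ENNReal.toReal_add (ENNReal.mul_ne_top ENNReal.ofReal_ne_top hBsen_fin)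
              (ENNReal.mul_ne_top ENNReal.ofReal_ne_top hZ.ne),
              ENNReal.toReal_mul, ENNReal.toReal_mul,
              ENNReal.toReal_ofReal (mul_nonneg ha0 (hpsi_pos x').le),
              ENNReal.toReal_ofReal hb0]
    have hcontU : Continuous (Ustar μ u t (fun _ => (1 : ℝ))) :=
      (hA2 t htpos (fun _ => 1) measurable_const ⟨1, fun _ => by norm_num⟩).2.2.1
    have hcontR : Continuous (fun x' => a * psi x' * Bs' + b * Z') :=
      ((continuous_const.mul hpsi_cont).mul continuous_const).add continuous_const
    have hall : ∀ x', Ustar μ u t (fun _ => (1 : ℝ)) x' ≤ a * psi x' * Bs' + b * Z' := by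
      have hminf : (fun x' => min (Ustar μ u t (fun _ => (1 : ℝ)) x')
          (a * psi x' * Bs' + b * Z')) = Ustar μ u t (fun _ => (1 : ℝ)) := by
        refine μ.eq_of_ae_eq ?_ (hcontU.min hcontR) hcontU
        filter_upwards [hkey'] with x' hx'
        exact min_eq_left hx'
      intro x'
      exact min_eq_left_iff.mp (congrFun hminf x')
    have h1 := hall x
    have hcoef : Real.exp (lam * t₁) * Λi * Bs'
        + Real.exp (lam * t₁) * C₀ * Real.exp (γ * t₁) * Z' ≤ C := by
      rw [hCdef]
      have h2 : 0 ≤ Real.exp (lam * t₁) * Λi * B' := by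
        apply mul_nonneg (mul_nonneg (Real.exp_pos _).le hΛinv.le) hB'0
      nlinarith
    have hprod : 0 ≤ Real.exp (-(lam * t)) * psi x :=
      mul_nonneg (Real.exp_pos _).le (hpsi_pos x).le
    have hterm : Real.exp (-(lam * t)) * Real.exp (lam * t₁) * C₀ * Real.exp (γ * t₁) * Z'
        * Real.exp (-(γ * t))
        ≤ Real.exp (-(lam * t)) * Real.exp (lam * t₁) * C₀ * Real.exp (γ * t₁) * Z' * psi x := by
      apply mul_le_mul_of_nonneg_left heγψ
      exact mul_nonneg (mul_nonneg (mul_nonneg (mul_nonneg (Real.exp_pos (-(lam * t))).le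
        (Real.exp_pos (lam * t₁)).le) hC₀.le) (Real.exp_pos (γ * t₁)).le) hZ'0
    have h3 := mul_le_mul_of_nonneg_right hcoef hprod
    calc Ustar μ u t (fun _ => (1 : ℝ)) x ≤ a * psi x * Bs' + b * Z' := h1
      _ ≤ C * Real.exp (-(lam * t)) * psi x := by
          rw [ha_def, hb_def, hea, heb]
          linarith [hterm, h3]
end
end

section
/- Assume (A2)–(A3) for some t₀ > 0, the ground state data with the spectral-gap kernel estimate (constants C₀, γ), and Z(t₁) < ∞ for some t₁ ≥ t₀. Then there exists C > 0 such that |e^{λ₀ t} Z(t) − ‖φ₀‖₁ ‖ψ₀‖₁ / Λ| ≤ C e^{−γ t} for all t > 6t₁. -/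
open MeasureTheory Real Set Filter Topology
open scoped ENNReal NNReal

set_option maxHeartbeats 2000000

noncomputable section

variable {M : Type*}

private lemma aux_integrable {A : Type*} [MeasurableSpace A] {μ : Measure A} {f : A → ℝ}
    (hm : Measurable f) (hnn : ∀ x, 0 ≤ f x)
    (hf : ∫⁻ x, ENNReal.ofReal (f x) ∂μ < ⊤) : Integrable f μ := by
  refine ⟨hm.aestronglyMeasurable, ?_⟩
  rwa [hasFiniteIntegral_iff_ofReal (Filter.Eventually.of_forall hnn)]

/-- Heat-content asymptotics:
`|e^(λ₀ t) Z(t) - ‖φ₀‖₁ ‖ψ₀‖₁ / Λ| ≤ C e^(-γ t)` for `t > 6t₁`. -/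
theorem statement17
    [TopologicalSpace M] [PolishSpace M] [LocallyCompactSpace M]
    [MeasurableSpace M] [BorelSpace M]
    (μ : Measure M) [IsLocallyFiniteMeasure μ] [Measure.IsOpenPosMeasure μ] [SigmaFinite μ]
    (u : ℝ → M → M → ℝ)
    (hu_nonneg : ∀ t, 0 < t → ∀ x y, 0 ≤ u t x y)
    (hu_meas : ∀ t, 0 < t → Measurable (Function.uncurry (u t)))
    (hCK : ∀ s t : ℝ, 0 < s → 0 < t → ∀ x y,
      u (s + t) x y = ∫ z, u s x z * u t z y ∂μ)
    (t₀ : ℝ) (ht₀ : 0 < t₀)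
    (hA2 : ∀ t, 0 < t → ∀ f : M → ℝ, Measurable f → (∃ C, ∀ x, |f x| ≤ C) →
      Continuous (Uop μ u t f) ∧ (∃ C, ∀ x, |Uop μ u t f x| ≤ C) ∧
      Continuous (Ustar μ u t f) ∧ (∃ C, ∀ x, |Ustar μ u t f x| ≤ C))
    (hA3 : (∃ C, ∀ᵐ x ∂μ, ∫ y, (u t₀ x y) ^ 2 ∂μ ≤ C) ∧
      (∃ C, ∀ᵐ y ∂μ, ∫ x, (u t₀ x y) ^ 2 ∂μ ≤ C))
    (lam : ℝ) (phi psi : M → ℝ)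
    (hphi_cont : Continuous phi) (hphi_bdd : ∃ C, ∀ x, |phi x| ≤ C)
    (hphi_L2 : MemLp phi 2 μ) (hphi_pos : ∀ᵐ x ∂μ, 0 < phi x)
    (hpsi_cont : Continuous psi) (hpsi_bdd : ∃ C, ∀ x, |psi x| ≤ C)
    (hpsi_L2 : MemLp psi 2 μ) (hpsi_pos : ∀ᵐ x ∂μ, 0 < psi x)
    (hphi_eig : ∀ t, 0 < t → ∀ x, Uop μ u t phi x = Real.exp (-(lam * t)) * phi x)
    (hpsi_eig : ∀ t, 0 < t → ∀ y, Ustar μ u t psi y = Real.exp (-(lam * t)) * psi y)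
    (hLam_int : Integrable (fun x => phi x * psi x) μ)
    (hLam_pos : 0 < ∫ x, phi x * psi x ∂μ)
    (C₀ γ : ℝ) (hC₀ : 0 < C₀) (hγ : 0 < γ)
    (hgap : ∀ t, 2 * t₀ < t → ∀ᵐ q ∂(μ.prod μ),
      |Real.exp (lam * t) * u t q.1 q.2 -
        (∫ x, phi x * psi x ∂μ)⁻¹ * (phi q.1 * psi q.2)| ≤ C₀ * Real.exp (-(γ * t)))
    (t₁ : ℝ) (ht₁ : t₀ ≤ t₁)
    (hZ : heatContent μ u t₁ < ⊤) :
    ∃ C : ℝ, 0 < C ∧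
      ∀ t, 6 * t₁ < t →
        |Real.exp (lam * t) * (∫ x, Uop μ u t (fun _ => (1 : ℝ)) x ∂μ) -
            (∫ x, |phi x| ∂μ) * (∫ x, |psi x| ∂μ) / (∫ x, phi x * psi x ∂μ)| ≤
          C * Real.exp (-(γ * t)) := by
  classical
  obtain ⟨Cphi0, hCphi0⟩ := hphi_bdd
  obtain ⟨Cpsi0, hCpsi0⟩ := hpsi_bdd
  set Cphi := max Cphi0 0 with hCphi_def
  set Cpsi := max Cpsi0 0 with hCpsi_def
  have hCphi : ∀ x, |phi x| ≤ Cphi := fun x => le_trans (hCphi0 x) (le_max_left _ _)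
  have hCpsi : ∀ x, |psi x| ≤ Cpsi := fun x => le_trans (hCpsi0 x) (le_max_left _ _)
  have hCphi_nn : 0 ≤ Cphi := le_max_right _ _
  have hCpsi_nn : 0 ≤ Cpsi := le_max_right _ _
  set Lam := ∫ x, phi x * psi x ∂μ with hLam_def
  have hLam : 0 < Lam := hLam_pos
  have hLaminv : 0 < Lam⁻¹ := inv_pos.mpr hLam
  have ht₁pos : 0 < t₁ := lt_of_lt_of_le ht₀ ht₁
  have hmphi : Measurable phi := hphi_cont.measurable
  have hmpsi : Measurable psi := hpsi_cont.measurable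
  have hK : ∀ t, 0 < t → Measurable fun q : M × M => ENNReal.ofReal (u t q.1 q.2) :=
    fun t ht => (hu_meas t ht).ennreal_ofReal
  have hu1nn : ∀ x z, 0 ≤ u t₁ x z := hu_nonneg t₁ ht₁pos
  -- the two marginal functions of the kernel at time t₁
  set g : M → ℝ≥0∞ := fun z => ∫⁻ x, ENNReal.ofReal (u t₁ x z) ∂μ with hg_def
  set h : M → ℝ≥0∞ := fun w => ∫⁻ y, ENNReal.ofReal (u t₁ w y) ∂μ with hh_def
  have hgmeas : Measurable g := Measurable.lintegral_prod_left (hK t₁ ht₁pos)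
  have hhmeas : Measurable h := Measurable.lintegral_prod_right' (hK t₁ ht₁pos)
  set L1 : ℝ≥0∞ := ∫⁻ w, h w ∂μ with hL1_def
  have hL1 : L1 < ⊤ := by
    rw [hL1_def]
    simp only [hh_def]
    simpa [heatContent] using hZ
  have hgL1 : ∫⁻ z, g z ∂μ = L1 := by
    exact (lintegral_lintegral_swap (hK t₁ ht₁pos).aemeasurable).symm
  have hmarg1 : ∀ᵐ x ∂μ, h x < ⊤ := ae_lt_top hhmeas hL1.ne
  have hmarg2 : ∀ᵐ y ∂μ, g y < ⊤ := ae_lt_top hgmeas (hgL1 ▸ hL1.ne)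
  have hint1 : ∀ᵐ x ∂μ, Integrable (fun z => u t₁ x z) μ := by
    filter_upwards [hmarg1] with x hx
    exact aux_integrable (hu_meas t₁ ht₁pos).of_uncurry_left (hu1nn x) hx
  have hint2 : ∀ᵐ y ∂μ, Integrable (fun w => u t₁ w y) μ := by
    filter_upwards [hmarg2] with y hy
    exact aux_integrable (hu_meas t₁ ht₁pos).of_uncurry_right (fun w => hu1nn w y) hy
  -- the L¹-type lintegrals of phi and psi
  set Phi : ℝ≥0∞ := ∫⁻ x, ENNReal.ofReal (phi x) ∂μ with hPhi_def
  set Psi : ℝ≥0∞ := ∫⁻ x, ENNReal.ofReal (psi x) ∂μ with hPsi_def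
  set A' : ℝ≥0∞ := ∫⁻ z, g z * ENNReal.ofReal (phi z) ∂μ with hA'_def
  set B' : ℝ≥0∞ := ∫⁻ w, ENNReal.ofReal (psi w) * h w ∂μ with hB'_def
  -- A' and B' computations
  have hA' : A' = ENNReal.ofReal (Real.exp (-(lam * t₁))) * Phi := by
    have hmm : Measurable (Function.uncurry fun x z => ENNReal.ofReal (u t₁ x z) * ENNReal.ofReal (phi z)) :=
      (hK t₁ ht₁pos).mul (hmphi.ennreal_ofReal.comp measurable_snd)
    calc A' = ∫⁻ z, ∫⁻ x, ENNReal.ofReal (u t₁ x z) * ENNReal.ofReal (phi z) ∂μ ∂μ := by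
          rw [hA'_def]
          refine lintegral_congr fun z => ?_
          rw [lintegral_mul_const _ ((hu_meas t₁ ht₁pos).of_uncurry_right.ennreal_ofReal)]
      _ = ∫⁻ x, ∫⁻ z, ENNReal.ofReal (u t₁ x z) * ENNReal.ofReal (phi z) ∂μ ∂μ :=
          (lintegral_lintegral_swap hmm.aemeasurable).symm
      _ = ∫⁻ x, ENNReal.ofReal (Real.exp (-(lam * t₁)) * phi x) ∂μ := by
          refine lintegral_congr_ae ?_
          filter_upwards [hint1] with x hx
          have hi : Integrable (fun z => u t₁ x z * phi z) μ := by
            refine (hx.mul_const Cphi).mono'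
              (((hu_meas t₁ ht₁pos).of_uncurry_left.mul hmphi).aestronglyMeasurable) ?_
            refine Filter.Eventually.of_forall fun z => ?_
            rw [Real.norm_eq_abs, abs_mul, abs_of_nonneg (hu1nn x z)]
            exact mul_le_mul_of_nonneg_left (hCphi z) (hu1nn x z)
          have hnn : 0 ≤ᵐ[μ] fun z => u t₁ x z * phi z := by
            filter_upwards [hphi_pos] with z hz
            exact mul_nonneg (hu1nn x z) hz.le
          have heq := ofReal_integral_eq_lintegral_ofReal hi hnn
          have heig : (∫ z, u t₁ x z * phi z ∂μ) = Real.exp (-(lam * t₁)) * phi x :=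
            hphi_eig t₁ ht₁pos x
          rw [← heig, heq]
          exact lintegral_congr fun z => (ENNReal.ofReal_mul (hu1nn x z)).symm
      _ = ENNReal.ofReal (Real.exp (-(lam * t₁))) * Phi := by
          rw [hPhi_def, ← lintegral_const_mul _ hmphi.ennreal_ofReal]
          exact lintegral_congr fun x => ENNReal.ofReal_mul (Real.exp_nonneg _)
  have hB' : B' = ENNReal.ofReal (Real.exp (-(lam * t₁))) * Psi := by
    have hmm : Measurable (Function.uncurry fun w y => ENNReal.ofReal (psi w) * ENNReal.ofReal (u t₁ w y)) :=
      (hmpsi.ennreal_ofReal.comp measurable_fst).mul (hK t₁ ht₁pos)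
    calc B' = ∫⁻ w, ∫⁻ y, ENNReal.ofReal (psi w) * ENNReal.ofReal (u t₁ w y) ∂μ ∂μ := by
          rw [hB'_def]
          refine lintegral_congr fun w => ?_
          rw [lintegral_const_mul _ ((hu_meas t₁ ht₁pos).of_uncurry_left.ennreal_ofReal)]
      _ = ∫⁻ y, ∫⁻ w, ENNReal.ofReal (psi w) * ENNReal.ofReal (u t₁ w y) ∂μ ∂μ :=
          lintegral_lintegral_swap hmm.aemeasurable
      _ = ∫⁻ y, ENNReal.ofReal (Real.exp (-(lam * t₁)) * psi y) ∂μ := by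
          refine lintegral_congr_ae ?_
          filter_upwards [hint2] with y hy
          have hi : Integrable (fun w => u t₁ w y * psi w) μ := by
            refine (hy.mul_const Cpsi).mono'
              (((hu_meas t₁ ht₁pos).of_uncurry_right.mul hmpsi).aestronglyMeasurable) ?_
            refine Filter.Eventually.of_forall fun w => ?_
            rw [Real.norm_eq_abs, abs_mul, abs_of_nonneg (hu1nn w y)]
            exact mul_le_mul_of_nonneg_left (hCpsi w) (hu1nn w y)
          have hnn : 0 ≤ᵐ[μ] fun w => u t₁ w y * psi w := by
            filter_upwards [hpsi_pos] with w hw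
            exact mul_nonneg (hu1nn w y) hw.le
          have heq := ofReal_integral_eq_lintegral_ofReal hi hnn
          have heig : (∫ w, u t₁ w y * psi w ∂μ) = Real.exp (-(lam * t₁)) * psi y :=
            hpsi_eig t₁ ht₁pos y
          rw [← heig, heq]
          refine lintegral_congr fun w => ?_
          rw [ENNReal.ofReal_mul (hu1nn w y), mul_comm]
      _ = ENNReal.ofReal (Real.exp (-(lam * t₁))) * Psi := by
          rw [hPsi_def, ← lintegral_const_mul _ hmpsi.ennreal_ofReal]
          exact lintegral_congr fun y => ENNReal.ofReal_mul (Real.exp_nonneg _)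
  have hA'fin : A' ≠ ⊤ := by
    have hle : A' ≤ L1 * ENNReal.ofReal Cphi := by
      rw [hA'_def]
      calc ∫⁻ z, g z * ENNReal.ofReal (phi z) ∂μ
          ≤ ∫⁻ z, g z * ENNReal.ofReal Cphi ∂μ :=
            lintegral_mono fun z =>
              mul_le_mul_right (ENNReal.ofReal_le_ofReal ((le_abs_self _).trans (hCphi z))) _
        _ = L1 * ENNReal.ofReal Cphi := by rw [lintegral_mul_const _ hgmeas, hgL1]
    exact ne_top_of_le_ne_top (ENNReal.mul_ne_top hL1.ne ENNReal.ofReal_ne_top) hle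
  have hB'fin : B' ≠ ⊤ := by
    have hle : B' ≤ ENNReal.ofReal Cpsi * L1 := by
      rw [hB'_def]
      calc ∫⁻ w, ENNReal.ofReal (psi w) * h w ∂μ
          ≤ ∫⁻ w, ENNReal.ofReal Cpsi * h w ∂μ :=
            lintegral_mono fun w =>
              mul_le_mul_left (ENNReal.ofReal_le_ofReal ((le_abs_self _).trans (hCpsi w))) _
        _ = ENNReal.ofReal Cpsi * L1 := by rw [lintegral_const_mul _ hhmeas, hL1_def]
    exact ne_top_of_le_ne_top (ENNReal.mul_ne_top ENNReal.ofReal_ne_top hL1.ne) hle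
  have hPhifin : Phi ≠ ⊤ := by
    intro hcon
    rw [hcon, ENNReal.mul_top (by simp [Real.exp_pos])] at hA'
    exact hA'fin hA'
  have hPsifin : Psi ≠ ⊤ := by
    intro hcon
    rw [hcon, ENNReal.mul_top (by simp [Real.exp_pos])] at hB'
    exact hB'fin hB'
  set Phir := Phi.toReal with hPhir_def
  set Psir := Psi.toReal with hPsir_def
  set l := L1.toReal with hl_def
  have hPhiabs : ∫ x, |phi x| ∂μ = Phir := by
    rw [integral_eq_lintegral_of_nonneg_ae (Filter.Eventually.of_forall fun x => abs_nonneg _)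
      hmphi.abs.aestronglyMeasurable, hPhir_def, hPhi_def]
    congr 1
    refine lintegral_congr_ae ?_
    filter_upwards [hphi_pos] with x hx
    rw [abs_of_pos hx]
  have hPsiabs : ∫ x, |psi x| ∂μ = Psir := by
    rw [integral_eq_lintegral_of_nonneg_ae (Filter.Eventually.of_forall fun x => abs_nonneg _)
      hmpsi.abs.aestronglyMeasurable, hPsir_def, hPsi_def]
    congr 1
    refine lintegral_congr_ae ?_
    filter_upwards [hpsi_pos] with x hx
    rw [abs_of_pos hx]
  -- uniform a.e. bound on the kernel for times beyond 2t₀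
  have hbound : ∀ τ, 2 * t₀ < τ → ∀ᵐ q ∂(μ.prod μ),
      u τ q.1 q.2 ≤ Real.exp (-(lam * τ)) * (Lam⁻¹ * Cphi * Cpsi + C₀) := by
    intro τ hτ
    have hτpos : 0 < τ := lt_trans (by linarith) hτ
    filter_upwards [hgap τ hτ] with q hq
    have h1 := (abs_le.mp hq).2
    have h2 : phi q.1 * psi q.2 ≤ Cphi * Cpsi := by
      calc phi q.1 * psi q.2 ≤ |phi q.1 * psi q.2| := le_abs_self _
        _ = |phi q.1| * |psi q.2| := abs_mul _ _
        _ ≤ Cphi * Cpsi := mul_le_mul (hCphi _) (hCpsi _) (abs_nonneg _) hCphi_nn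
    have h3 : Real.exp (-(γ * τ)) ≤ 1 := Real.exp_le_one_iff.mpr (by nlinarith)
    have h4 : Real.exp (lam * τ) * u τ q.1 q.2 ≤ Lam⁻¹ * Cphi * Cpsi + C₀ := by
      have := mul_le_mul_of_nonneg_left h2 hLaminv.le
      nlinarith [hC₀.le]
    calc u τ q.1 q.2 = Real.exp (-(lam * τ)) * (Real.exp (lam * τ) * u τ q.1 q.2) := by
          rw [← mul_assoc, ← Real.exp_add]; simp
      _ ≤ Real.exp (-(lam * τ)) * (Lam⁻¹ * Cphi * Cpsi + C₀) :=
          mul_le_mul_of_nonneg_left h4 (Real.exp_nonneg _)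
  -- swapped version of an a.e. product statement
  have hswap : ∀ τ (B : ℝ), 0 < τ → (∀ᵐ q ∂(μ.prod μ), u τ q.1 q.2 ≤ B) →
      ∀ᵐ w ∂μ, ∀ᵐ z ∂μ, u τ z w ≤ B := by
    intro τ B hτpos hae
    have hset : MeasurableSet {q : M × M | u τ q.2 q.1 ≤ B} :=
      measurableSet_le ((hu_meas τ hτpos).comp measurable_swap) measurable_const
    have : ∀ᵐ q ∂(μ.prod μ), u τ q.2 q.1 ≤ B := by
      rw [show (μ.prod μ) = Measure.map Prod.swap (μ.prod μ) from Measure.prod_swap.symm,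
        ae_map_iff measurable_swap.aemeasurable hset]
      exact hae
    exact MeasureTheory.Measure.ae_ae_of_ae_prod this
  -- choose the constant
  refine ⟨C₀ * l ^ 2 * Real.exp ((2 * lam + 2 * γ) * t₁) + 1, by positivity, ?_⟩
  intro t ht
  -- time decomposition t = t₁ + (s + t₁)
  set s := t - 2 * t₁ with hs_def
  set r := s + t₁ with hr_def
  have htpos : 0 < t := by nlinarith
  have hspos : 0 < s := by rw [hs_def]; nlinarith
  have hrpos : 0 < r := by rw [hr_def]; nlinarith
  have hs2t₀ : 2 * t₀ < s := by rw [hs_def]; linarith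
  have hr2t₀ : 2 * t₀ < r := by rw [hr_def, hs_def]; linarith
  have htr : t = t₁ + r := by rw [hr_def, hs_def]; ring
  set Bs := Real.exp (-(lam * s)) * (Lam⁻¹ * Cphi * Cpsi + C₀) with hBs_def
  set Br := Real.exp (-(lam * r)) * (Lam⁻¹ * Cphi * Cpsi + C₀) with hBr_def
  have hBs_ae : ∀ᵐ z ∂μ, ∀ᵐ w ∂μ, u s z w ≤ Bs :=
    MeasureTheory.Measure.ae_ae_of_ae_prod (hbound s hs2t₀)
  have hBr_ae : ∀ᵐ y ∂μ, ∀ᵐ z ∂μ, u r z y ≤ Br := hswap r Br hrpos (hbound r hr2t₀)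
  set F : M → ℝ≥0∞ := fun z => ∫⁻ y, ENNReal.ofReal (u r z y) ∂μ with hF_def
  have hFmeas : Measurable F := Measurable.lintegral_prod_right' (hK r hrpos)
  -- Chapman-Kolmogorov at the lintegral level, first split
  have hE1 : ∀ᵐ x ∂μ, (∫⁻ y, ENNReal.ofReal (u t x y) ∂μ)
      = ∫⁻ z, ENNReal.ofReal (u t₁ x z) * F z ∂μ := by
    filter_upwards [hint1] with x hx
    have step1 : ∀ᵐ y ∂μ, ENNReal.ofReal (u t x y)
        = ∫⁻ z, ENNReal.ofReal (u t₁ x z) * ENNReal.ofReal (u r z y) ∂μ := by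
      filter_upwards [hBr_ae] with y hy
      have hi : Integrable (fun z => u t₁ x z * u r z y) μ := by
        refine (hx.mul_const Br).mono'
          (((hu_meas t₁ ht₁pos).of_uncurry_left.mul
            ((hu_meas r hrpos).of_uncurry_right)).aestronglyMeasurable) ?_
        filter_upwards [hy] with z hz
        rw [Real.norm_eq_abs, abs_mul, abs_of_nonneg (hu1nn x z),
          abs_of_nonneg (hu_nonneg r hrpos z y)]
        exact mul_le_mul_of_nonneg_left hz (hu1nn x z)
      calc ENNReal.ofReal (u t x y) = ENNReal.ofReal (∫ z, u t₁ x z * u r z y ∂μ) := by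
            rw [htr, hCK t₁ r ht₁pos hrpos x y]
        _ = ∫⁻ z, ENNReal.ofReal (u t₁ x z * u r z y) ∂μ :=
            ofReal_integral_eq_lintegral_ofReal hi (Filter.Eventually.of_forall fun z =>
              mul_nonneg (hu1nn x z) (hu_nonneg r hrpos z y))
        _ = ∫⁻ z, ENNReal.ofReal (u t₁ x z) * ENNReal.ofReal (u r z y) ∂μ :=
            lintegral_congr fun z => ENNReal.ofReal_mul (hu1nn x z)
    calc (∫⁻ y, ENNReal.ofReal (u t x y) ∂μ)
        = ∫⁻ y, ∫⁻ z, ENNReal.ofReal (u t₁ x z) * ENNReal.ofReal (u r z y) ∂μ ∂μ :=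
          lintegral_congr_ae step1
      _ = ∫⁻ z, ∫⁻ y, ENNReal.ofReal (u t₁ x z) * ENNReal.ofReal (u r z y) ∂μ ∂μ :=
          lintegral_lintegral_swap
            (((((hu_meas t₁ ht₁pos).of_uncurry_left.comp measurable_snd).ennreal_ofReal).mul
              ((hK r hrpos).comp measurable_swap)).aemeasurable)
      _ = ∫⁻ z, ENNReal.ofReal (u t₁ x z) * F z ∂μ := by
          refine lintegral_congr fun z => ?_
          rw [lintegral_const_mul _ ((hu_meas r hrpos).of_uncurry_left.ennreal_ofReal)]
  set Lt : ℝ≥0∞ := ∫⁻ x, ∫⁻ y, ENNReal.ofReal (u t x y) ∂μ ∂μ with hLt_def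
  have hLtgF : Lt = ∫⁻ z, g z * F z ∂μ := by
    calc Lt = ∫⁻ x, ∫⁻ z, ENNReal.ofReal (u t₁ x z) * F z ∂μ ∂μ := by
          rw [hLt_def]; exact lintegral_congr_ae hE1
      _ = ∫⁻ z, ∫⁻ x, ENNReal.ofReal (u t₁ x z) * F z ∂μ ∂μ :=
          lintegral_lintegral_swap (((hK t₁ ht₁pos).mul (hFmeas.comp measurable_snd)).aemeasurable)
      _ = ∫⁻ z, g z * F z ∂μ := by
          refine lintegral_congr fun z => ?_
          rw [lintegral_mul_const _ ((hu_meas t₁ ht₁pos).of_uncurry_right.ennreal_ofReal)]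
  set Q : M → ℝ≥0∞ := fun z => ∫⁻ w, ENNReal.ofReal (u s z w) * h w ∂μ with hQ_def
  -- second split
  have hE2 : ∀ᵐ z ∂μ, F z = Q z := by
    filter_upwards [hBs_ae] with z hz
    have step1 : ∀ᵐ y ∂μ, ENNReal.ofReal (u r z y)
        = ∫⁻ w, ENNReal.ofReal (u s z w) * ENNReal.ofReal (u t₁ w y) ∂μ := by
      filter_upwards [hint2] with y hy
      have hi : Integrable (fun w => u s z w * u t₁ w y) μ := by
        refine (hy.const_mul Bs).mono'
          (((hu_meas s hspos).of_uncurry_left.mul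
            ((hu_meas t₁ ht₁pos).of_uncurry_right)).aestronglyMeasurable) ?_
        filter_upwards [hz] with w hw
        rw [Real.norm_eq_abs, abs_mul, abs_of_nonneg (hu_nonneg s hspos z w),
          abs_of_nonneg (hu1nn w y)]
        exact mul_le_mul_of_nonneg_right hw (hu1nn w y)
      calc ENNReal.ofReal (u r z y) = ENNReal.ofReal (∫ w, u s z w * u t₁ w y ∂μ) := by
            rw [hr_def, hCK s t₁ hspos ht₁pos z y]
        _ = ∫⁻ w, ENNReal.ofReal (u s z w * u t₁ w y) ∂μ :=
            ofReal_integral_eq_lintegral_ofReal hi (Filter.Eventually.of_forall fun w =>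
              mul_nonneg (hu_nonneg s hspos z w) (hu1nn w y))
        _ = ∫⁻ w, ENNReal.ofReal (u s z w) * ENNReal.ofReal (u t₁ w y) ∂μ :=
            lintegral_congr fun w => ENNReal.ofReal_mul (hu_nonneg s hspos z w)
    calc F z = ∫⁻ y, ∫⁻ w, ENNReal.ofReal (u s z w) * ENNReal.ofReal (u t₁ w y) ∂μ ∂μ := by
          simp only [hF_def]; exact lintegral_congr_ae step1
      _ = ∫⁻ w, ∫⁻ y, ENNReal.ofReal (u s z w) * ENNReal.ofReal (u t₁ w y) ∂μ ∂μ :=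
          lintegral_lintegral_swap
            (((((hu_meas s hspos).of_uncurry_left.comp measurable_snd).ennreal_ofReal).mul
              ((hK t₁ ht₁pos).comp measurable_swap)).aemeasurable)
      _ = Q z := by
          simp only [hQ_def]
          refine lintegral_congr fun w => ?_
          rw [lintegral_const_mul _ ((hu_meas t₁ ht₁pos).of_uncurry_left.ennreal_ofReal)]
  have hLtQ : Lt = ∫⁻ z, g z * Q z ∂μ := by
    rw [hLtgF]
    refine lintegral_congr_ae ?_
    filter_upwards [hE2] with z hz
    rw [hz]
  -- the spectral gap bounds in ℝ≥0∞ form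
  set k := ENNReal.ofReal (Real.exp (-(lam * s)) * Lam⁻¹) with hk_def
  set c := ENNReal.ofReal (Real.exp (-(lam * s)) * (C₀ * Real.exp (-(γ * s)))) with hc_def
  have hnnk : 0 ≤ Real.exp (-(lam * s)) * Lam⁻¹ := mul_nonneg (Real.exp_nonneg _) hLaminv.le
  have hnnc : 0 ≤ Real.exp (-(lam * s)) * (C₀ * Real.exp (-(γ * s))) :=
    mul_nonneg (Real.exp_nonneg _) (mul_nonneg hC₀.le (Real.exp_nonneg _))
  have hkey : ∀ z w : M, 0 ≤ phi z →
      ENNReal.ofReal (Real.exp (-(lam * s)) * (Lam⁻¹ * (phi z * psi w)))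
      = k * (ENNReal.ofReal (phi z) * ENNReal.ofReal (psi w)) := by
    intro z w hpz
    rw [show Real.exp (-(lam * s)) * (Lam⁻¹ * (phi z * psi w))
        = (Real.exp (-(lam * s)) * Lam⁻¹) * (phi z * psi w) by ring,
      ENNReal.ofReal_mul hnnk, ENNReal.ofReal_mul hpz, hk_def]
  have hgap_s := MeasureTheory.Measure.ae_ae_of_ae_prod (hgap s hs2t₀)
  have hub : ∀ᵐ z ∂μ, ∀ᵐ w ∂μ,
      ENNReal.ofReal (u s z w) ≤ k * (ENNReal.ofReal (phi z) * ENNReal.ofReal (psi w)) + c := by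
    filter_upwards [hgap_s, hphi_pos] with z hz hpz
    filter_upwards [hz, hpsi_pos] with w hw hpw
    have h1 := (abs_le.mp hw).2
    have h2 : u s z w ≤ Real.exp (-(lam * s)) * (Lam⁻¹ * (phi z * psi w))
        + Real.exp (-(lam * s)) * (C₀ * Real.exp (-(γ * s))) := by
      have h3 : Real.exp (lam * s) * u s z w
          ≤ Lam⁻¹ * (phi z * psi w) + C₀ * Real.exp (-(γ * s)) := by linarith
      calc u s z w = Real.exp (-(lam * s)) * (Real.exp (lam * s) * u s z w) := by
            rw [← mul_assoc, ← Real.exp_add]; simp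
        _ ≤ _ := by
            rw [← mul_add]
            exact mul_le_mul_of_nonneg_left h3 (Real.exp_nonneg _)
    calc ENNReal.ofReal (u s z w)
        ≤ ENNReal.ofReal (Real.exp (-(lam * s)) * (Lam⁻¹ * (phi z * psi w))
            + Real.exp (-(lam * s)) * (C₀ * Real.exp (-(γ * s)))) := ENNReal.ofReal_le_ofReal h2
      _ = k * (ENNReal.ofReal (phi z) * ENNReal.ofReal (psi w)) + c := by
          rw [ENNReal.ofReal_add
            (mul_nonneg (Real.exp_nonneg _)
              (mul_nonneg hLaminv.le (mul_nonneg hpz.le hpw.le))) hnnc,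
            hkey z w hpz.le, hc_def]
  have hlb : ∀ᵐ z ∂μ, ∀ᵐ w ∂μ,
      k * (ENNReal.ofReal (phi z) * ENNReal.ofReal (psi w)) ≤ ENNReal.ofReal (u s z w) + c := by
    filter_upwards [hgap_s, hphi_pos] with z hz hpz
    filter_upwards [hz, hpsi_pos] with w hw hpw
    have h1 := (abs_le.mp hw).1
    have h2 : Real.exp (-(lam * s)) * (Lam⁻¹ * (phi z * psi w))
        ≤ u s z w + Real.exp (-(lam * s)) * (C₀ * Real.exp (-(γ * s))) := by
      have h3 : Lam⁻¹ * (phi z * psi w)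
          ≤ Real.exp (lam * s) * u s z w + C₀ * Real.exp (-(γ * s)) := by linarith
      have h4 := mul_le_mul_of_nonneg_left h3 (Real.exp_nonneg (-(lam * s)))
      have h5 : Real.exp (-(lam * s)) * (Real.exp (lam * s) * u s z w) = u s z w := by
        rw [← mul_assoc, ← Real.exp_add]; simp
      rw [mul_add, h5] at h4
      exact h4
    calc k * (ENNReal.ofReal (phi z) * ENNReal.ofReal (psi w))
        = ENNReal.ofReal (Real.exp (-(lam * s)) * (Lam⁻¹ * (phi z * psi w))) := (hkey z w hpz.le).symm
      _ ≤ ENNReal.ofReal (u s z w + Real.exp (-(lam * s)) * (C₀ * Real.exp (-(γ * s)))) :=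
          ENNReal.ofReal_le_ofReal h2
      _ = ENNReal.ofReal (u s z w) + c := by
          rw [ENNReal.ofReal_add (hu_nonneg s hspos z w) hnnc, hc_def]
  -- upper and lower bounds for Lt
  have hmulψh : Measurable fun w => ENNReal.ofReal (psi w) * h w := hmpsi.ennreal_ofReal.mul hhmeas
  have hQub : ∀ᵐ z ∂μ, Q z ≤ k * ENNReal.ofReal (phi z) * B' + c * L1 := by
    filter_upwards [hub] with z hz
    have h1 : Q z ≤ ∫⁻ w, (k * (ENNReal.ofReal (phi z) * ENNReal.ofReal (psi w)) + c) * h w ∂μ := by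
      simp only [hQ_def]
      exact lintegral_mono_ae (hz.mono fun w hw => mul_le_mul_left hw (h w))
    refine le_trans h1 (le_of_eq ?_)
    calc ∫⁻ w, (k * (ENNReal.ofReal (phi z) * ENNReal.ofReal (psi w)) + c) * h w ∂μ
        = ∫⁻ w, (k * ENNReal.ofReal (phi z)) * (ENNReal.ofReal (psi w) * h w) + c * h w ∂μ :=
          lintegral_congr fun w => by ring
      _ = (k * ENNReal.ofReal (phi z)) * B' + c * L1 := by
          rw [lintegral_add_left (hmulψh.const_mul _), lintegral_const_mul _ hmulψh,
            lintegral_const_mul _ hhmeas, ← hB'_def, ← hL1_def]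
  have hLt_ub : Lt ≤ k * A' * B' + c * (L1 * L1) := by
    calc Lt = ∫⁻ z, g z * Q z ∂μ := hLtQ
      _ ≤ ∫⁻ z, (k * B') * (g z * ENNReal.ofReal (phi z)) + (c * L1) * g z ∂μ := by
          refine lintegral_mono_ae ?_
          filter_upwards [hQub] with z hz
          calc g z * Q z ≤ g z * (k * ENNReal.ofReal (phi z) * B' + c * L1) :=
                mul_le_mul_right hz _
            _ = (k * B') * (g z * ENNReal.ofReal (phi z)) + (c * L1) * g z := by ring
      _ = (k * B') * A' + (c * L1) * L1 := by
          rw [lintegral_add_left (f := fun z => (k * B') * (g z * ENNReal.ofReal (phi z))) (((hgmeas.mul hmphi.ennreal_ofReal : Measurable fun z => g z * ENNReal.ofReal (phi z))).const_mul _),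
            lintegral_const_mul _ (f := fun z => g z * ENNReal.ofReal (phi z)) ((hgmeas.mul hmphi.ennreal_ofReal : Measurable fun z => g z * ENNReal.ofReal (phi z))),
            lintegral_const_mul _ hgmeas, ← hA'_def, hgL1]
      _ = k * A' * B' + c * (L1 * L1) := by ring
  have hQlb : ∀ᵐ z ∂μ, k * ENNReal.ofReal (phi z) * B' ≤ Q z + c * L1 := by
    filter_upwards [hlb] with z hz
    have h1 : k * ENNReal.ofReal (phi z) * B'
        = ∫⁻ w, (k * (ENNReal.ofReal (phi z) * ENNReal.ofReal (psi w))) * h w ∂μ := by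
      rw [hB'_def, ← lintegral_const_mul _ hmulψh]
      exact lintegral_congr fun w => by ring
    have h2 : ∫⁻ w, (k * (ENNReal.ofReal (phi z) * ENNReal.ofReal (psi w))) * h w ∂μ
        ≤ ∫⁻ w, (ENNReal.ofReal (u s z w) + c) * h w ∂μ :=
      lintegral_mono_ae (hz.mono fun w hw => mul_le_mul_left hw (h w))
    have h3 : ∫⁻ w, (ENNReal.ofReal (u s z w) + c) * h w ∂μ = Q z + c * L1 := by
      calc ∫⁻ w, (ENNReal.ofReal (u s z w) + c) * h w ∂μ
          = ∫⁻ w, ENNReal.ofReal (u s z w) * h w + c * h w ∂μ :=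
            lintegral_congr fun w => by ring
        _ = Q z + c * L1 := by
            rw [lintegral_add_left (f := fun w => ENNReal.ofReal (u s z w) * h w)
              (((hu_meas s hspos).of_uncurry_left.ennreal_ofReal.mul hhmeas : Measurable fun w => ENNReal.ofReal (u s z w) * h w)),
              lintegral_const_mul _ hhmeas, ← hL1_def]
    rw [h1]
    exact h2.trans (le_of_eq h3)
  have hLt_lb : k * A' * B' ≤ Lt + c * (L1 * L1) := by
    have h1 : ∫⁻ z, (k * B') * (g z * ENNReal.ofReal (phi z)) ∂μ = k * A' * B' := by
      rw [lintegral_const_mul _ (f := fun z => g z * ENNReal.ofReal (phi z)) ((hgmeas.mul hmphi.ennreal_ofReal : Measurable fun z => g z * ENNReal.ofReal (phi z))), ← hA'_def]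
      ring
    calc k * A' * B' = ∫⁻ z, (k * B') * (g z * ENNReal.ofReal (phi z)) ∂μ := h1.symm
      _ ≤ ∫⁻ z, g z * Q z + (c * L1) * g z ∂μ := by
          refine lintegral_mono_ae ?_
          filter_upwards [hQlb] with z hz
          calc (k * B') * (g z * ENNReal.ofReal (phi z))
              = g z * (k * ENNReal.ofReal (phi z) * B') := by ring
            _ ≤ g z * (Q z + c * L1) := mul_le_mul_right hz _
            _ = g z * Q z + (c * L1) * g z := by ring
      _ = Lt + c * (L1 * L1) := by
          rw [lintegral_add_right _ (hgmeas.const_mul _), lintegral_const_mul _ hgmeas, hgL1,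
            ← hLtQ]
          ring
  -- finiteness
  have hkfin : k ≠ ⊤ := ENNReal.ofReal_ne_top
  have hcfin : c ≠ ⊤ := ENNReal.ofReal_ne_top
  have hfin1 : k * A' * B' ≠ ⊤ := ENNReal.mul_ne_top (ENNReal.mul_ne_top hkfin hA'fin) hB'fin
  have hfin2 : c * (L1 * L1) ≠ ⊤ := ENNReal.mul_ne_top hcfin (ENNReal.mul_ne_top hL1.ne hL1.ne)
  have hRHSfin : k * A' * B' + c * (L1 * L1) ≠ ⊤ := ENNReal.add_ne_top.mpr ⟨hfin1, hfin2⟩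
  have hLtfin : Lt ≠ ⊤ := ne_top_of_le_ne_top hRHSfin hLt_ub
  -- pass to real numbers
  have hkA : (k * A' * B').toReal
      = (Real.exp (-(lam * s)) * Lam⁻¹) * (Real.exp (-(lam * t₁)) * Phir)
        * (Real.exp (-(lam * t₁)) * Psir) := by
    rw [ENNReal.toReal_mul, ENNReal.toReal_mul, hA', hB', ENNReal.toReal_mul, ENNReal.toReal_mul,
      hk_def, ENNReal.toReal_ofReal hnnk, ENNReal.toReal_ofReal (Real.exp_nonneg _),
      ← hPhir_def, ← hPsir_def]
  have hcL : (c * (L1 * L1)).toReal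
      = (Real.exp (-(lam * s)) * (C₀ * Real.exp (-(γ * s)))) * (l * l) := by
    rw [ENNReal.toReal_mul, ENNReal.toReal_mul, hc_def, ENNReal.toReal_ofReal hnnc, ← hl_def]
  have hub_real : Lt.toReal ≤ (Real.exp (-(lam * s)) * Lam⁻¹) * (Real.exp (-(lam * t₁)) * Phir)
      * (Real.exp (-(lam * t₁)) * Psir)
      + (Real.exp (-(lam * s)) * (C₀ * Real.exp (-(γ * s)))) * (l * l) := by
    have hmono := ENNReal.toReal_mono hRHSfin hLt_ub
    rwa [ENNReal.toReal_add hfin1 hfin2, hkA, hcL] at hmono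
  have hlb_real : (Real.exp (-(lam * s)) * Lam⁻¹) * (Real.exp (-(lam * t₁)) * Phir)
      * (Real.exp (-(lam * t₁)) * Psir)
      ≤ Lt.toReal + (Real.exp (-(lam * s)) * (C₀ * Real.exp (-(γ * s)))) * (l * l) := by
    have hmono := ENNReal.toReal_mono (ENNReal.add_ne_top.mpr ⟨hLtfin, hfin2⟩) hLt_lb
    rwa [ENNReal.toReal_add hLtfin hfin2, hkA, hcL] at hmono
  -- identify the real heat content
  have hG : Measurable fun x => ∫⁻ y, ENNReal.ofReal (u t x y) ∂μ :=
    Measurable.lintegral_prod_right' (hK t htpos)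
  have hZreal : (∫ x, Uop μ u t (fun _ => (1 : ℝ)) x ∂μ) = Lt.toReal := by
    have h1 : ∀ x, Uop μ u t (fun _ => (1 : ℝ)) x
        = (∫⁻ y, ENNReal.ofReal (u t x y) ∂μ).toReal := by
      intro x
      have h0 : Uop μ u t (fun _ => (1 : ℝ)) x = ∫ y, u t x y ∂μ := by
        simp [Uop]
      rw [h0, integral_eq_lintegral_of_nonneg_ae
        (Filter.Eventually.of_forall fun y => hu_nonneg t htpos x y)
        ((hu_meas t htpos).of_uncurry_left.aestronglyMeasurable)]
    rw [integral_congr_ae (Filter.Eventually.of_forall h1), hLt_def]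
    exact integral_toReal hG.aemeasurable (ae_lt_top hG (hLt_def ▸ hLtfin))
  -- final arithmetic
  set D := (Real.exp (-(lam * s)) * Lam⁻¹) * (Real.exp (-(lam * t₁)) * Phir)
    * (Real.exp (-(lam * t₁)) * Psir) with hD_def
  set E := (Real.exp (-(lam * s)) * (C₀ * Real.exp (-(γ * s)))) * (l * l) with hE_def
  have habs : |Lt.toReal - D| ≤ E := abs_le.mpr ⟨by linarith, by linarith⟩
  have hexpD : Real.exp (lam * t) * D = Phir * Psir / Lam := by
    rw [hD_def]
    have h0 : Real.exp (lam * t) * (Real.exp (-(lam * s))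
        * (Real.exp (-(lam * t₁)) * Real.exp (-(lam * t₁)))) = 1 := by
      rw [← Real.exp_add, ← Real.exp_add, ← Real.exp_add,
        show lam * t + (-(lam * s) + (-(lam * t₁) + -(lam * t₁))) = 0 by rw [hs_def]; ring]
      exact Real.exp_zero
    calc Real.exp (lam * t) * ((Real.exp (-(lam * s)) * Lam⁻¹)
          * (Real.exp (-(lam * t₁)) * Phir) * (Real.exp (-(lam * t₁)) * Psir))
        = (Real.exp (lam * t) * (Real.exp (-(lam * s))
            * (Real.exp (-(lam * t₁)) * Real.exp (-(lam * t₁))))) * (Lam⁻¹ * (Phir * Psir)) := by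
          ring
      _ = Phir * Psir / Lam := by rw [h0, one_mul, inv_mul_eq_div]
  have hexpE : Real.exp (lam * t) * E
      = (C₀ * (l * l) * Real.exp ((2 * lam + 2 * γ) * t₁)) * Real.exp (-(γ * t)) := by
    rw [hE_def]
    have h0 : Real.exp (lam * t) * (Real.exp (-(lam * s)) * Real.exp (-(γ * s)))
        = Real.exp ((2 * lam + 2 * γ) * t₁) * Real.exp (-(γ * t)) := by
      rw [← Real.exp_add, ← Real.exp_add, ← Real.exp_add]
      congr 1
      rw [hs_def]; ring
    calc Real.exp (lam * t) * ((Real.exp (-(lam * s)) * (C₀ * Real.exp (-(γ * s)))) * (l * l))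
        = (Real.exp (lam * t) * (Real.exp (-(lam * s)) * Real.exp (-(γ * s)))) * (C₀ * (l * l)) := by
          ring
      _ = (C₀ * (l * l) * Real.exp ((2 * lam + 2 * γ) * t₁)) * Real.exp (-(γ * t)) := by
          rw [h0]; ring
  rw [hZreal, hPhiabs, hPsiabs]
  calc |Real.exp (lam * t) * Lt.toReal - Phir * Psir / Lam|
      = Real.exp (lam * t) * |Lt.toReal - D| := by
        rw [← hexpD, ← mul_sub, abs_mul, abs_of_pos (Real.exp_pos _)]
    _ ≤ Real.exp (lam * t) * E := mul_le_mul_of_nonneg_left habs (Real.exp_nonneg _)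
    _ = (C₀ * (l * l) * Real.exp ((2 * lam + 2 * γ) * t₁)) * Real.exp (-(γ * t)) := hexpE
    _ ≤ (C₀ * l ^ 2 * Real.exp ((2 * lam + 2 * γ) * t₁) + 1) * Real.exp (-(γ * t)) := by
        have h1 : C₀ * (l * l) * Real.exp ((2 * lam + 2 * γ) * t₁)
            ≤ C₀ * l ^ 2 * Real.exp ((2 * lam + 2 * γ) * t₁) + 1 := by
          have h2 : l * l = l ^ 2 := by ring
          rw [h2]; linarith
        exact mul_le_mul_of_nonneg_right h1 (Real.exp_nonneg _)
end
end
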